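/- arXiv:quant-ph/0610124 — 8 statements merged into one kernel-verified Lean document; each statement's English description precedes it below -/
import Mathlib

section
/- Let k ≥ 1 and let (Ω, P) be a probability space carrying an i.i.d. sequence X₁, X₂, … of random k×k complex matrices such that almost surely each Xₘ is Hermitian with trace 1 and ‖Xₘ‖ ≤ K for some constant K > 0. Suppose the expectation E[X₁] = ρ is an invertible (i.e. positive definite) density matrix. Then there exist constants C > 0 and E > 0 such that for every n ≥ 1, P( (1/n)(X₁ + ⋯ + Xₙ) is not positive semidefinite ) ≤ C·exp(−n·E). In words: the probability that the unbiased unconstrained estimate is not a density matrix converges exponentially to 0. -/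
open MeasureTheory ProbabilityTheory
open scoped ComplexOrder

/-- Matrices are measurable entrywise (the product σ-algebra of `m → n → ℂ`). -/
noncomputable instance matrixMeasurableSpaceStmt0 {m n : Type*} : MeasurableSpace (Matrix m n ℂ) :=
  inferInstanceAs (MeasurableSpace (m → n → ℂ))

open scoped Matrix
open Real

section Aux
set_option maxHeartbeats 1000000


lemma quad_smul {k : ℕ} (ρ : Matrix (Fin k) (Fin k) ℂ) (a : ℝ) (v : Fin k → ℂ) :
    dotProduct (star ((a:ℂ) • v)) (ρ.mulVec ((a:ℂ) • v)) =
      ((a^2 : ℝ) : ℂ) * dotProduct (star v) (ρ.mulVec v) := by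
  rw [Matrix.mulVec_smul, dotProduct_smul, star_smul, smul_dotProduct]
  simp only [smul_eq_mul, Complex.star_def, Complex.conj_ofReal]
  push_cast
  ring

lemma posdef_quadform_lb {k : ℕ} (hk : 1 ≤ k) (ρ : Matrix (Fin k) (Fin k) ℂ)
    (hρ : ρ.PosDef) :
    ∃ δ > 0, ∀ v : Fin k → ℂ, δ * (∑ i, ‖v i‖ ^ 2) ≤
      (dotProduct (star v) (ρ.mulVec v)).re := by
  classical
  have hQcont : Continuous fun v : Fin k → ℂ => ∑ i, ‖v i‖ ^ 2 :=
    continuous_finset_sum _ fun i _ =>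
      ((continuous_norm.comp (continuous_apply i)).pow 2)
  have hfcont : Continuous fun v : Fin k → ℂ => (dotProduct (star v) (ρ.mulVec v)).re := by
    apply Complex.continuous_re.comp
    unfold dotProduct Matrix.mulVec dotProduct
    simp only [Pi.star_apply]
    exact continuous_finset_sum _ fun i _ =>
      ((Complex.continuous_conj.comp (continuous_apply i)).mul
        (continuous_finset_sum _ fun j _ => (continuous_const.mul (continuous_apply j))))
  have hclosed : IsClosed ((fun v : Fin k → ℂ => ∑ i, ‖v i‖ ^ 2) ⁻¹' {1}) :=
    isClosed_singleton.preimage hQcont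
  have hsub : ((fun v : Fin k → ℂ => ∑ i, ‖v i‖ ^ 2) ⁻¹' {1}) ⊆
      Metric.closedBall 0 1 := by
    intro v hv
    simp only [Set.mem_preimage, Set.mem_singleton_iff] at hv
    simp only [Metric.mem_closedBall, dist_zero_right]
    rw [pi_norm_le_iff_of_nonneg zero_le_one]
    intro i
    have h1 : ‖v i‖ ^ 2 ≤ ∑ j, ‖v j‖ ^ 2 :=
      Finset.single_le_sum (f := fun j => ‖v j‖ ^ 2)
        (fun j _ => by positivity) (Finset.mem_univ i)
    rw [hv] at h1
    have : ‖v i‖ ≤ 1 := by nlinarith [norm_nonneg (v i)]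
    simpa using this
  have hcompact : IsCompact ((fun v : Fin k → ℂ => ∑ i, ‖v i‖ ^ 2) ⁻¹' {1}) :=
    (isCompact_closedBall (0 : Fin k → ℂ) 1).of_isClosed_subset hclosed hsub
  have hne : ((fun v : Fin k → ℂ => ∑ i, ‖v i‖ ^ 2) ⁻¹' {1}).Nonempty := by
    refine ⟨Pi.single ⟨0, hk⟩ 1, ?_⟩
    simp only [Set.mem_preimage, Set.mem_singleton_iff]
    rw [Finset.sum_eq_single ⟨0, hk⟩]
    · simp
    · intro j _ hj; simp [Pi.single_eq_of_ne hj]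
    · simp
  obtain ⟨w, hwS, hwmin⟩ := hcompact.exists_isMinOn hne hfcont.continuousOn
  have hwQ : ∑ i, ‖w i‖ ^ 2 = 1 := hwS
  have hw0 : w ≠ 0 := by
    intro h
    rw [h] at hwQ
    simp at hwQ
  have hδpos : 0 < (dotProduct (star w) (ρ.mulVec w)).re :=
    (Complex.lt_def.mp (hρ.dotProduct_mulVec_pos hw0)).1
  refine ⟨_, hδpos, fun v => ?_⟩
  by_cases hv : v = 0
  · simp [hv, Matrix.mulVec_zero, dotProduct_zero]
  · have hQv : 0 < ∑ i, ‖v i‖ ^ 2 := by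
      rcases Function.ne_iff.mp hv with ⟨i, hi⟩
      have h0 : 0 < ‖v i‖ ^ 2 := by
        have := norm_pos_iff.mpr hi; positivity
      have hle : ‖v i‖ ^ 2 ≤ ∑ j, ‖v j‖ ^ 2 :=
        Finset.single_le_sum (f := fun j => ‖v j‖ ^ 2)
          (fun j _ => by positivity) (Finset.mem_univ i)
      linarith
    have hcpos : 0 < Real.sqrt (∑ i, ‖v i‖ ^ 2) := Real.sqrt_pos.mpr hQv
    set c : ℝ := Real.sqrt (∑ i, ‖v i‖ ^ 2) with hc
    have hc2 : c ^ 2 = ∑ i, ‖v i‖ ^ 2 := Real.sq_sqrt hQv.le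
    have huS : ((c⁻¹ : ℝ) : ℂ) • v ∈
        ((fun v : Fin k → ℂ => ∑ i, ‖v i‖ ^ 2) ⁻¹' {1}) := by
      simp only [Set.mem_preimage, Set.mem_singleton_iff]
      have hterm : ∀ i, ‖(((c⁻¹ : ℝ) : ℂ) • v) i‖ ^ 2
          = c⁻¹ ^ 2 * ‖v i‖ ^ 2 := by
        intro i
        simp only [Pi.smul_apply, smul_eq_mul, norm_mul, Complex.norm_real, Real.norm_eq_abs,
          abs_of_nonneg (inv_nonneg.mpr hcpos.le)]
        ring
      rw [Finset.sum_congr rfl fun i _ => hterm i, ← Finset.mul_sum, ← hc2]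
      field_simp
    have hquad := quad_smul ρ (c⁻¹) v
    have hle := hwmin huS
    simp only [Set.mem_setOf_eq] at hle
    have hre : (dotProduct (star (((c⁻¹ : ℝ) : ℂ) • v))
        (ρ.mulVec (((c⁻¹ : ℝ) : ℂ) • v))).re
        = (c⁻¹)^2 * (dotProduct (star v) (ρ.mulVec v)).re := by
      rw [hquad, Complex.re_ofReal_mul]
    rw [hre] at hle
    have h2 : (dotProduct (star w) (ρ.mulVec w)).re * (c^2)
        ≤ (dotProduct (star v) (ρ.mulVec v)).re := by
      have hcinv : (c⁻¹)^2 * (c^2) = 1 := by field_simp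
      have h3 := mul_le_mul_of_nonneg_right hle (sq_nonneg c)
      have h4 : c⁻¹ ^ 2 * (dotProduct (star v) (ρ.mulVec v)).re * c ^ 2
          = (dotProduct (star v) (ρ.mulVec v)).re := by
        calc c⁻¹ ^ 2 * (dotProduct (star v) (ρ.mulVec v)).re * c ^ 2
            = (dotProduct (star v) (ρ.mulVec v)).re * (c⁻¹ ^ 2 * c ^ 2) := by ring
          _ = _ := by rw [hcinv, mul_one]
      linarith [h4 ▸ h3]
    calc (dotProduct (star w) (ρ.mulVec w)).re * (∑ i, ‖v i‖ ^ 2)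
        = (dotProduct (star w) (ρ.mulVec w)).re * (c^2) := by rw [hc2]
      _ ≤ _ := h2



lemma herm_quadform_real {k : ℕ} (S : Matrix (Fin k) (Fin k) ℂ) (hS : S.IsHermitian)
    (x : Fin k → ℂ) : (dotProduct (star x) (S.mulVec x)).im = 0 := by
  have h : star (dotProduct (star x) (S.mulVec x)) =
      dotProduct (star x) (S.mulVec x) := by
    calc star (dotProduct (star x) (S.mulVec x))
        = dotProduct (star (S.mulVec x)) x := by
          rw [← Matrix.star_dotProduct]
      _ = dotProduct (star x) (S.mulVec x) := by
          rw [Matrix.star_mulVec, ← Matrix.dotProduct_mulVec, hS.eq]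
  have h2 := congrArg Complex.im h
  rw [show star (dotProduct (star x) (S.mulVec x)) =
    starRingEnd ℂ (dotProduct (star x) (S.mulVec x)) from rfl, Complex.conj_im] at h2
  linarith

lemma posSemidef_of_close {k : ℕ} (hk : 1 ≤ k) (ρ : Matrix (Fin k) (Fin k) ℂ)
    (hρ : ρ.PosDef) :
    ∃ ε > 0, ∀ S : Matrix (Fin k) (Fin k) ℂ, S.IsHermitian →
      (∀ i j, ‖S i j - ρ i j‖ ≤ ε) → S.PosSemidef := by
  obtain ⟨δ, hδ, hlb⟩ := posdef_quadform_lb hk ρ hρ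
  refine ⟨δ / (k ^ 2 + 1), by positivity, fun S hS hclose => ?_⟩
  refine Matrix.PosSemidef.of_dotProduct_mulVec_nonneg hS fun x => ?_
  rw [Complex.nonneg_iff]
  refine ⟨?_, (herm_quadform_real S hS x).symm⟩
  have key : (dotProduct (star x) (S.mulVec x)).re =
      (dotProduct (star x) (ρ.mulVec x)).re +
      (dotProduct (star x) ((S - ρ).mulVec x)).re := by
    rw [← Complex.add_re, ← dotProduct_add, ← Matrix.add_mulVec, add_sub_cancel]
  rw [key]
  have hpert : |(dotProduct (star x) ((S - ρ).mulVec x)).re| ≤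
      (δ / (k ^ 2 + 1)) * ((k:ℝ) * ∑ i, ‖x i‖ ^ 2) := by
    have h1 : |(dotProduct (star x) ((S - ρ).mulVec x)).re| ≤
        ‖dotProduct (star x) ((S - ρ).mulVec x)‖ := Complex.abs_re_le_norm _
    refine h1.trans ?_
    unfold dotProduct Matrix.mulVec dotProduct
    refine (norm_sum_le _ _).trans ?_
    have h2 : ∀ i : Fin k, ‖star x i * ∑ j, (S - ρ) i j * x j‖ ≤
        (δ / (k ^ 2 + 1)) * (‖x i‖ * ∑ j, ‖x j‖) := by
      intro i
      rw [norm_mul]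
      have : ‖star x i‖ = ‖x i‖ := by
        simp [Pi.star_apply]
      rw [this]
      have h3 : ‖∑ j, (S - ρ) i j * x j‖ ≤
          (δ / (k ^ 2 + 1)) * ∑ j, ‖x j‖ := by
        refine (norm_sum_le _ _).trans ?_
        rw [Finset.mul_sum]
        refine Finset.sum_le_sum fun j _ => ?_
        rw [norm_mul]
        exact mul_le_mul_of_nonneg_right (by simpa using hclose i j) (by positivity)
      calc ‖x i‖ * ‖∑ j, (S - ρ) i j * x j‖
          ≤ ‖x i‖ * ((δ / (k ^ 2 + 1)) * ∑ j, ‖x j‖) :=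
            mul_le_mul_of_nonneg_left h3 (by positivity)
        _ = (δ / (k ^ 2 + 1)) * (‖x i‖ * ∑ j, ‖x j‖) := by ring
    refine (Finset.sum_le_sum fun i _ => h2 i).trans ?_
    rw [← Finset.mul_sum, ← Finset.sum_mul]
    have hcs : (∑ i, ‖x i‖) * (∑ j, ‖x j‖) ≤
        (k:ℝ) * ∑ i, ‖x i‖ ^ 2 := by
      have h := sq_sum_le_card_mul_sum_sq (s := Finset.univ) (f := fun i => ‖x i‖)
      simpa [sq, Finset.card_univ] using h
    exact mul_le_mul_of_nonneg_left hcs (by positivity)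
  have h1 := hlb x
  have hsum : (0:ℝ) ≤ ∑ i, ‖x i‖ ^ 2 := by positivity
  have hd : (δ / (k ^ 2 + 1)) * (k:ℝ) ≤ δ := by
    rw [div_mul_eq_mul_div, div_le_iff₀ (by positivity)]
    nlinarith [hδ, (by exact_mod_cast hk : (1:ℝ) ≤ k), sq_nonneg ((k:ℝ) - 1)]
  nlinarith [abs_le.mp hpert]




lemma exp_le_quad {x : ℝ} (hx : |x| ≤ 1) : Real.exp x ≤ 1 + x + (3/4) * x ^ 2 := by
  have h := Real.exp_bound hx (n := 2) (by norm_num)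
  have h2 : ∑ m ∈ Finset.range 2, x ^ m / m.factorial = 1 + x := by
    simp [Finset.sum_range_succ]
  rw [h2] at h
  rw [sq_abs] at h
  norm_num [Nat.factorial] at h
  have h4 := abs_le.mp h
  linarith [h4.2]

lemma integrable_of_bounded_meas {Ω : Type*} [MeasurableSpace Ω] (P : Measure Ω) [IsProbabilityMeasure P]
    {Y : Ω → ℝ} (hY : Measurable Y) {B : ℝ} (hbd : ∀ᵐ ω ∂P, |Y ω| ≤ B) :
    Integrable Y P := by
  refine (integrable_const B).mono' hY.aestronglyMeasurable ?_
  filter_upwards [hbd] with ω h using by simpa [Real.norm_eq_abs] using h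

lemma mgf_le_of_bounded {Ω : Type*} [MeasurableSpace Ω] (P : Measure Ω) [IsProbabilityMeasure P]
    {Y : Ω → ℝ} (hY : Measurable Y) {B t : ℝ} (hB : 0 < B)
    (hbd : ∀ᵐ ω ∂P, |Y ω| ≤ B) (hmean : ∫ ω, Y ω ∂P = 0) (ht : 0 ≤ t) (htB : t * B ≤ 1) :
    mgf Y P t ≤ Real.exp ((3/4) * t ^ 2 * B ^ 2) := by
  have hYint : Integrable Y P := integrable_of_bounded_meas P hY hbd
  have hY2int : Integrable (fun ω => (3/4) * (t * Y ω) ^ 2) P := by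
    refine (integrable_const ((3/4) * (t * B) ^ 2)).mono'
      ((((hY.const_mul t).pow_const 2).const_mul _).aestronglyMeasurable) ?_
    filter_upwards [hbd] with ω h
    rw [Real.norm_eq_abs, abs_of_nonneg (by positivity)]
    have : (t * Y ω) ^ 2 ≤ (t * B) ^ 2 := by
      rw [mul_pow, mul_pow]
      have : Y ω ^ 2 ≤ B ^ 2 := by
        rw [← sq_abs (Y ω)]
        exact pow_le_pow_left₀ (abs_nonneg _) h 2
      nlinarith [sq_nonneg t]
    nlinarith
  have hint : Integrable (fun ω => Real.exp (t * Y ω)) P := by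
    refine (integrable_const (Real.exp 1)).mono'
      (((hY.const_mul t).exp).aestronglyMeasurable) ?_
    filter_upwards [hbd] with ω h
    rw [Real.norm_eq_abs, abs_of_nonneg (Real.exp_nonneg _), Real.exp_le_exp]
    calc t * Y ω ≤ |t * Y ω| := le_abs_self _
      _ = t * |Y ω| := by rw [abs_mul, abs_of_nonneg ht]
      _ ≤ t * B := mul_le_mul_of_nonneg_left h ht
      _ ≤ 1 := htB
  have hpt : ∀ᵐ ω ∂P, Real.exp (t * Y ω) ≤ 1 + t * Y ω + (3/4) * (t * Y ω) ^ 2 := by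
    filter_upwards [hbd] with ω h
    apply exp_le_quad
    rw [abs_mul, abs_of_nonneg ht]
    calc t * |Y ω| ≤ t * B := mul_le_mul_of_nonneg_left h ht
      _ ≤ 1 := htB
  have hmono : mgf Y P t ≤ ∫ ω, (1 + t * Y ω + (3/4) * (t * Y ω) ^ 2) ∂P := by
    refine integral_mono_ae hint ?_ hpt
    exact (integrable_const 1).add (hYint.const_mul t) |>.add hY2int
  have heq : ∫ ω, (1 + t * Y ω + (3/4) * (t * Y ω) ^ 2) ∂P
      = 1 + (3/4) * t^2 * ∫ ω, Y ω ^ 2 ∂P := by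
    have i1 : Integrable (fun ω => 1 + t * Y ω) P := (integrable_const 1).add (hYint.const_mul t)
    rw [integral_add i1 hY2int, integral_add (integrable_const 1) (hYint.const_mul t)]
    simp only [integral_const, probReal_univ, smul_eq_mul, one_mul]
    rw [integral_const_mul, hmean, mul_zero, add_zero]
    have : ∫ ω, (3/4) * (t * Y ω) ^ 2 ∂P = (3/4) * t^2 * ∫ ω, Y ω ^ 2 ∂P := by
      rw [← integral_const_mul]
      congr 1 with ω
      ring
    rw [this]
  have hvar : ∫ ω, Y ω ^ 2 ∂P ≤ B ^ 2 := by
    have h2 : Integrable (fun ω => Y ω ^ 2) P := by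
      refine (integrable_const (B^2)).mono' ((hY.pow_const 2).aestronglyMeasurable) ?_
      filter_upwards [hbd] with ω h
      rw [Real.norm_eq_abs, abs_of_nonneg (sq_nonneg _), ← sq_abs]
      exact pow_le_pow_left₀ (abs_nonneg _) h 2
    calc ∫ ω, Y ω ^ 2 ∂P ≤ ∫ _ω, B ^ 2 ∂P := by
          refine integral_mono_ae h2 (integrable_const _) ?_
          filter_upwards [hbd] with ω h
          rw [← sq_abs]
          exact pow_le_pow_left₀ (abs_nonneg _) h 2
      _ = B ^ 2 := by simp
  calc mgf Y P t ≤ 1 + (3/4) * t^2 * ∫ ω, Y ω ^ 2 ∂P := hmono.trans_eq heq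
    _ ≤ 1 + (3/4) * t^2 * B^2 := by nlinarith [sq_nonneg t]
    _ ≤ Real.exp ((3/4) * t^2 * B^2) := by
        have := Real.add_one_le_exp ((3/4) * t^2 * B^2)
        linarith

lemma chernoff_tail {Ω : Type*} [MeasurableSpace Ω] (P : Measure Ω) [IsProbabilityMeasure P]
    (Y : ℕ → Ω → ℝ) (hmeas : ∀ m, Measurable (Y m))
    (hindep : iIndepFun Y P)
    {B : ℝ} (hB : 0 < B) (hbd : ∀ m, ∀ᵐ ω ∂P, |Y m ω| ≤ B)
    (hmean : ∀ m, ∫ ω, Y m ω ∂P = 0) {ε : ℝ} (hε : 0 < ε) :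
    ∃ E > 0, ∀ n : ℕ,
      P {ω | (n : ℝ) * ε ≤ ∑ m ∈ Finset.range n, Y m ω} ≤
        ENNReal.ofReal (Real.exp (-(n : ℝ) * E)) := by
  set t : ℝ := min (1/B) (2*ε/(3*B^2)) with htdef
  have ht : 0 < t := lt_min (by positivity) (by positivity)
  have htB : t * B ≤ 1 := by
    have : t ≤ 1/B := min_le_left _ _
    rw [← le_div_iff₀ hB]
    exact this
  have hmgf : ∀ m, mgf (Y m) P t ≤ Real.exp (t * ε / 2) := by
    intro m
    refine (mgf_le_of_bounded P (hmeas m) hB (hbd m) (hmean m) ht.le htB).trans ?_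
    rw [Real.exp_le_exp]
    have h1 : t ≤ 2*ε/(3*B^2) := min_le_right _ _
    have h2 : (3/4) * t^2 * B^2 = (3/4) * t * B^2 * t := by ring
    have h3 : (3/4) * t * B^2 * t ≤ (3/4) * t * B^2 * (2*ε/(3*B^2)) :=
      mul_le_mul_of_nonneg_left h1 (by positivity)
    have h4 : (3/4) * t * B^2 * (2*ε/(3*B^2)) = t * ε / 2 := by field_simp; ring
    linarith [h2 ▸ (h4 ▸ h3)]
  refine ⟨t * ε / 2, by positivity, fun n => ?_⟩
  have hintexp : ∀ m, Integrable (fun ω => Real.exp (t * Y m ω)) P := by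
    intro m
    refine (integrable_const (Real.exp 1)).mono'
      (((hmeas m).const_mul t).exp).aestronglyMeasurable ?_
    filter_upwards [hbd m] with ω h
    rw [Real.norm_eq_abs, abs_of_nonneg (Real.exp_nonneg _), Real.exp_le_exp]
    calc t * Y m ω ≤ |t * Y m ω| := le_abs_self _
      _ = t * |Y m ω| := by rw [abs_mul, abs_of_nonneg ht.le]
      _ ≤ t * B := mul_le_mul_of_nonneg_left h ht.le
      _ ≤ 1 := htB
  have hintsum : Integrable (fun ω => Real.exp (t * (∑ m ∈ Finset.range n, Y m) ω)) P :=
    hindep.integrable_exp_mul_sum hmeas (fun m _ => hintexp m)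
  have hch := measure_ge_le_exp_mul_mgf (μ := P) (X := ∑ m ∈ Finset.range n, Y m)
    ((n : ℝ) * ε) ht.le hintsum
  have hprod : mgf (∑ m ∈ Finset.range n, Y m) P t ≤ Real.exp ((n:ℝ) * (t * ε / 2)) := by
    rw [hindep.mgf_sum hmeas]
    calc ∏ m ∈ Finset.range n, mgf (Y m) P t ≤ ∏ _m ∈ Finset.range n, Real.exp (t * ε / 2) :=
          Finset.prod_le_prod (fun m _ => mgf_nonneg) (fun m _ => hmgf m)
      _ = Real.exp ((n:ℝ) * (t * ε / 2)) := by
          rw [Finset.prod_const, ← Real.exp_nat_mul]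
          simp
  have hset : {ω | (n : ℝ) * ε ≤ ∑ m ∈ Finset.range n, Y m ω} =
      {ω | (n : ℝ) * ε ≤ (∑ m ∈ Finset.range n, Y m) ω} := by
    simp only [Finset.sum_apply]
  have hbound : (P {ω | (n : ℝ) * ε ≤ ∑ m ∈ Finset.range n, Y m ω}).toReal ≤
      Real.exp (-(n:ℝ) * (t * ε / 2)) := by
    rw [hset]
    refine hch.trans ?_
    calc Real.exp (-t * ((n:ℝ) * ε)) * mgf (∑ m ∈ Finset.range n, Y m) P t
        ≤ Real.exp (-t * ((n:ℝ) * ε)) * Real.exp ((n:ℝ) * (t * ε / 2)) :=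
          mul_le_mul_of_nonneg_left hprod (Real.exp_nonneg _)
      _ = Real.exp (-(n:ℝ) * (t * ε / 2)) := by
          rw [← Real.exp_add]; ring_nf
  calc P {ω | (n : ℝ) * ε ≤ ∑ m ∈ Finset.range n, Y m ω}
      = ENNReal.ofReal ((P {ω | (n : ℝ) * ε ≤ ∑ m ∈ Finset.range n, Y m ω}).toReal) :=
        (ENNReal.ofReal_toReal (measure_ne_top _ _)).symm
    _ ≤ ENNReal.ofReal (Real.exp (-(n:ℝ) * (t * ε / 2))) := ENNReal.ofReal_le_ofReal hbound

end Aux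

set_option maxHeartbeats 1000000 in
/-- for an i.i.d. sequence of bounded random Hermitian trace-one `k×k` matrices
whose common expectation `ρ` is an invertible density matrix (positive definite), the
probability that the sample mean (the unbiased unconstrained estimate) is not positive
semidefinite, i.e. not a density matrix, decays exponentially: it is `≤ C·exp(−nE)` for some
constants `C, E > 0`. -/
theorem unconstrained_estimate_exponentially_density {k : ℕ} (hk : 1 ≤ k)
    {Ω : Type*} [MeasurableSpace Ω] (P : Measure Ω) [IsProbabilityMeasure P]
    (X : ℕ → Ω → Matrix (Fin k) (Fin k) ℂ)
    (hmeas : ∀ m, Measurable (X m))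
    (hindep : iIndepFun X P)
    (hident : ∀ m, Measure.map (X m) P = Measure.map (X 0) P)
    (K : ℝ) (hK : 0 < K)
    (hbdd : ∀ᵐ ω ∂P, ∀ m, (X m ω).IsHermitian ∧ (X m ω).trace = 1 ∧
      ∀ i j, ‖X m ω i j‖ ≤ K)
    (ρ : Matrix (Fin k) (Fin k) ℂ) (hρ : ρ.PosDef) (hρtr : ρ.trace = 1)
    (hmean : ∀ i j, ∫ ω, X 0 ω i j ∂P = ρ i j) :
    ∃ C > 0, ∃ E > 0, ∀ n : ℕ, 1 ≤ n →
      P {ω | ¬ ((n : ℂ)⁻¹ • ∑ m ∈ Finset.range n, X m ω).PosSemidef} ≤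
        ENNReal.ofReal (C * Real.exp (-(n : ℝ) * E)) := by
  classical
  obtain ⟨ε, hε, hmat⟩ := posSemidef_of_close hk ρ hρ
  -- measurability of entries
  have hMij : ∀ (i j : Fin k), Measurable (fun M : Matrix (Fin k) (Fin k) ℂ => M i j) :=
    fun i j => (measurable_pi_apply j).comp (measurable_pi_apply i)
  have hXij_meas : ∀ m (i j : Fin k), Measurable (fun ω => X m ω i j) :=
    fun m i j => (hMij i j).comp (hmeas m)
  -- bounds
  have hbd_m : ∀ m, ∀ᵐ ω ∂P, ∀ i j, ‖X m ω i j‖ ≤ K :=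
    fun m => hbdd.mono fun ω h => (h m).2.2
  have hXint : ∀ m (i j : Fin k), Integrable (fun ω => X m ω i j) P := by
    intro m i j
    refine (integrable_const K).mono' (hXij_meas m i j).aestronglyMeasurable ?_
    filter_upwards [hbd_m m] with ω h
    simpa using h i j
  have hρK : ∀ i j, ‖ρ i j‖ ≤ K := by
    intro i j
    rw [← hmean i j]
    have := norm_integral_le_of_norm_le_const (μ := P) (f := fun ω => X 0 ω i j) (C := K)
      (by filter_upwards [hbd_m 0] with ω h; simpa using h i j)
    simpa [measure_univ] using this
  -- identical means
  have hEij : ∀ m (i j : Fin k), ∫ ω, X m ω i j ∂P = ρ i j := by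
    intro m i j
    rw [← hmean i j]
    have h1 : ∫ ω, X m ω i j ∂P = ∫ M, M i j ∂(P.map (X m)) :=
      (integral_map (hmeas m).aemeasurable (hMij i j).aestronglyMeasurable).symm
    have h2 : ∫ ω, X 0 ω i j ∂P = ∫ M, M i j ∂(P.map (X 0)) :=
      (integral_map (hmeas 0).aemeasurable (hMij i j).aestronglyMeasurable).symm
    rw [h1, h2, hident m]
  -- the real/imaginary part extraction functions
  set part : Bool → ℂ → ℝ := fun b z => if b then z.re else z.im with hpart
  have hpartmeas : ∀ b, Measurable (part b) := by
    intro b; cases b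
    · simpa [hpart] using Complex.measurable_im
    · simpa [hpart] using Complex.measurable_re
  have hpartbd : ∀ b z, |part b z| ≤ ‖z‖ := by
    intro b z; cases b
    · simpa [hpart] using Complex.abs_im_le_norm z
    · simpa [hpart] using Complex.abs_re_le_norm z
  -- tail bounds for each index
  have key : ∀ (i j : Fin k) (b s : Bool), ∃ E > 0, ∀ n : ℕ,
      P {ω | (n : ℝ) * (ε/2) ≤ ∑ m ∈ Finset.range n,
        (if s then (1:ℝ) else -1) * (part b (X m ω i j) - part b (ρ i j))} ≤
        ENNReal.ofReal (Real.exp (-(n : ℝ) * E)) := by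
    intro i j b s
    set σ : ℝ := if s then (1:ℝ) else -1 with hσ
    have hσ1 : |σ| = 1 := by cases s <;> simp [hσ]
    set φ : Matrix (Fin k) (Fin k) ℂ → ℝ := fun M => σ * (part b (M i j) - part b (ρ i j))
      with hφ
    have hφmeas : Measurable φ :=
      (((hpartmeas b).comp (hMij i j)).sub_const _).const_mul σ
    refine chernoff_tail P (fun m ω => φ (X m ω)) (fun m => hφmeas.comp (hmeas m))
      (hindep.comp (fun _ => φ) (fun _ => hφmeas)) (B := 2*K) (by positivity) ?_ ?_
      (by positivity)
    · intro m
      filter_upwards [hbd_m m] with ω h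
      have h1 : |part b (X m ω i j)| ≤ K := (hpartbd b _).trans (h i j)
      have h2 : |part b (ρ i j)| ≤ K := (hpartbd b _).trans (hρK i j)
      calc |φ (X m ω)| = |σ| * |part b (X m ω i j) - part b (ρ i j)| := by
            rw [hφ, abs_mul]
        _ ≤ 1 * (|part b (X m ω i j)| + |part b (ρ i j)|) := by
            rw [hσ1]
            exact mul_le_mul_of_nonneg_left (abs_sub _ _) zero_le_one
        _ ≤ 2 * K := by linarith
    · intro m
      have hre : ∫ ω, part b (X m ω i j) ∂P = part b (ρ i j) := by
        cases b
        · have := integral_im (μ := P) (f := fun ω => X m ω i j) (hXint m i j)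
          simp only [RCLike.im_to_complex] at this
          simpa [hpart, hEij m i j] using this
        · have := integral_re (μ := P) (f := fun ω => X m ω i j) (hXint m i j)
          simp only [RCLike.re_to_complex] at this
          simpa [hpart, hEij m i j] using this
      have hintp : Integrable (fun ω => part b (X m ω i j)) P := by
        refine (integrable_const K).mono'
          (((hpartmeas b).comp (hXij_meas m i j)).aestronglyMeasurable) ?_
        filter_upwards [hbd_m m] with ω h
        simpa [Real.norm_eq_abs] using (hpartbd b _).trans (h i j)
      rw [show (fun ω => φ (X m ω)) = fun ω => σ * (part b (X m ω i j) - part b (ρ i j))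
        from rfl]
      rw [integral_const_mul, integral_sub hintp (integrable_const _), hre, integral_const]
      simp
  choose! Efun hEpos hEtail using key
  -- the minimum exponent over all indices
  set I : Finset (Fin k × Fin k × Bool × Bool) := Finset.univ with hI
  have hIne : I.Nonempty := ⟨⟨⟨0, hk⟩, ⟨0, hk⟩, true, true⟩, Finset.mem_univ _⟩
  set Emin : ℝ := I.inf' hIne (fun p => Efun p.1 p.2.1 p.2.2.1 p.2.2.2) with hEmin
  have hEminpos : 0 < Emin := by
    rw [hEmin, Finset.lt_inf'_iff]
    exact fun p _ => hEpos p.1 p.2.1 p.2.2.1 p.2.2.2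
  refine ⟨4 * k^2, by positivity, Emin, hEminpos, fun n hn => ?_⟩
  -- the bad event is a.e. contained in the union of tail events
  set T : Fin k × Fin k × Bool × Bool → Set Ω := fun p =>
    {ω | (n : ℝ) * (ε/2) ≤ ∑ m ∈ Finset.range n,
      (if p.2.2.2 then (1:ℝ) else -1) *
        (part p.2.2.1 (X m ω p.1 p.2.1) - part p.2.2.1 (ρ p.1 p.2.1))} with hT
  set G : Set Ω := {ω | ∀ m, (X m ω).IsHermitian ∧ (X m ω).trace = 1 ∧
      ∀ i j, ‖X m ω i j‖ ≤ K} with hG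
  have hGnull : P Gᶜ = 0 := by
    have := ae_iff.mp hbdd
    simpa [hG, Set.compl_setOf] using this
  -- the inclusion
  have hincl : {ω | ¬ ((n : ℂ)⁻¹ • ∑ m ∈ Finset.range n, X m ω).PosSemidef} ⊆
      Gᶜ ∪ ⋃ p : Fin k × Fin k × Bool × Bool, T p := by
    intro ω hω
    simp only [Set.mem_setOf_eq] at hω
    by_contra hc
    simp only [Set.mem_union, Set.mem_iUnion, not_or, not_exists] at hc
    obtain ⟨hcG, hcT⟩ := hc
    have hωG : ω ∈ G := by simpa using hcG
    rw [hG, Set.mem_setOf_eq] at hωG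
    -- for each i j, both real and imaginary parts deviate by at most ε/2
    have hdev : ∀ (i j : Fin k) (b : Bool),
        |(n:ℝ)⁻¹ * (∑ m ∈ Finset.range n, part b (X m ω i j)) - part b (ρ i j)| ≤ ε / 2 := by
      intro i j b
      have hnpos : (0:ℝ) < n := by exact_mod_cast hn
      have hplus := hcT ⟨i, j, b, true⟩
      have hminus := hcT ⟨i, j, b, false⟩
      rw [hT] at hplus hminus
      simp only [Set.mem_setOf_eq, not_le, eq_self_iff_true, if_true, Bool.false_eq_true,
        if_false] at hplus hminus
      have hsum : ∀ (σ : ℝ), ∑ m ∈ Finset.range n, σ * (part b (X m ω i j) - part b (ρ i j))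
          = σ * ((∑ m ∈ Finset.range n, part b (X m ω i j)) - n * part b (ρ i j)) := by
        intro σ
        rw [← Finset.mul_sum, Finset.sum_sub_distrib, Finset.sum_const, Finset.card_range,
          nsmul_eq_mul]
      rw [hsum 1, one_mul] at hplus
      rw [hsum (-1)] at hminus
      have habs : |(∑ m ∈ Finset.range n, part b (X m ω i j)) - (n:ℝ) * part b (ρ i j)|
          ≤ (n:ℝ) * (ε / 2) := by
        apply abs_le.mpr
        constructor
        · nlinarith [hminus]
        · linarith [hplus]
      have heq2 : (n:ℝ)⁻¹ * (∑ m ∈ Finset.range n, part b (X m ω i j)) - part b (ρ i j)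
          = (n:ℝ)⁻¹ * ((∑ m ∈ Finset.range n, part b (X m ω i j)) - (n:ℝ) * part b (ρ i j)) := by
        field_simp
      rw [heq2, abs_mul, abs_of_nonneg (inv_nonneg.mpr hnpos.le)]
      calc (n:ℝ)⁻¹ * |(∑ m ∈ Finset.range n, part b (X m ω i j)) - (n:ℝ) * part b (ρ i j)|
          ≤ (n:ℝ)⁻¹ * ((n:ℝ) * (ε / 2)) := mul_le_mul_of_nonneg_left habs (by positivity)
        _ = ε / 2 := by field_simp
    -- the sample mean is Hermitian
    have hnC : ((n:ℂ)⁻¹) = (((n:ℝ)⁻¹ : ℝ) : ℂ) := by push_cast; ring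
    have hherm : ((n : ℂ)⁻¹ • ∑ m ∈ Finset.range n, X m ω).IsHermitian := by
      show ((n : ℂ)⁻¹ • ∑ m ∈ Finset.range n, X m ω)ᴴ = _
      rw [Matrix.conjTranspose_smul, Matrix.conjTranspose_sum]
      congr 1
      · rw [hnC]; exact Complex.conj_ofReal _
      · exact Finset.sum_congr rfl fun m _ => (hωG m).1.eq
    -- entry bounds
    have hentry : ∀ (i j : Fin k),
        ‖((n : ℂ)⁻¹ • ∑ m ∈ Finset.range n, X m ω) i j - ρ i j‖ ≤ ε := by
      intro i j
      have happly : ((n : ℂ)⁻¹ • ∑ m ∈ Finset.range n, X m ω) i j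
          = (n:ℂ)⁻¹ * ∑ m ∈ Finset.range n, X m ω i j := by
        simp [Matrix.smul_apply, Matrix.sum_apply]
      have hre : (((n : ℂ)⁻¹ • ∑ m ∈ Finset.range n, X m ω) i j - ρ i j).re
          = (n:ℝ)⁻¹ * (∑ m ∈ Finset.range n, (X m ω i j).re) - (ρ i j).re := by
        rw [Complex.sub_re, happly, hnC, Complex.re_ofReal_mul, Complex.re_sum]
      have him : (((n : ℂ)⁻¹ • ∑ m ∈ Finset.range n, X m ω) i j - ρ i j).im
          = (n:ℝ)⁻¹ * (∑ m ∈ Finset.range n, (X m ω i j).im) - (ρ i j).im := by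
        rw [Complex.sub_im, happly, hnC, Complex.im_ofReal_mul, Complex.im_sum]
      have hdre := hdev i j true
      have hdim := hdev i j false
      simp only [hpart, if_true, if_false] at hdre hdim
      calc ‖((n : ℂ)⁻¹ • ∑ m ∈ Finset.range n, X m ω) i j - ρ i j‖
          ≤ |(((n : ℂ)⁻¹ • ∑ m ∈ Finset.range n, X m ω) i j - ρ i j).re|
            + |(((n : ℂ)⁻¹ • ∑ m ∈ Finset.range n, X m ω) i j - ρ i j).im| :=
            Complex.norm_le_abs_re_add_abs_im _
        _ ≤ ε / 2 + ε / 2 := by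
            rw [hre, him]
            exact add_le_add hdre hdim
        _ = ε := by ring
    exact hω (hmat _ hherm hentry)
  -- measure computation
  calc P {ω | ¬ ((n : ℂ)⁻¹ • ∑ m ∈ Finset.range n, X m ω).PosSemidef}
      ≤ P (Gᶜ ∪ ⋃ p : Fin k × Fin k × Bool × Bool, T p) := measure_mono hincl
    _ ≤ P Gᶜ + P (⋃ p : Fin k × Fin k × Bool × Bool, T p) := measure_union_le _ _
    _ = P (⋃ p : Fin k × Fin k × Bool × Bool, T p) := by rw [hGnull, zero_add]
    _ ≤ ∑' p : Fin k × Fin k × Bool × Bool, P (T p) := measure_iUnion_le _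
    _ = ∑ p : Fin k × Fin k × Bool × Bool, P (T p) := tsum_fintype _
    _ ≤ ∑ _p : Fin k × Fin k × Bool × Bool, ENNReal.ofReal (Real.exp (-(n:ℝ) * Emin)) := by
        refine Finset.sum_le_sum fun p _ => ?_
        obtain ⟨i, j, b, s⟩ := p
        refine (hEtail i j b s n).trans ?_
        apply ENNReal.ofReal_le_ofReal
        rw [Real.exp_le_exp]
        have h1 : Emin ≤ Efun i j b s := Finset.inf'_le _ (Finset.mem_univ (⟨i, j, b, s⟩ : Fin k × Fin k × Bool × Bool))
        have hn0 : (0:ℝ) ≤ n := Nat.cast_nonneg n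
        nlinarith
    _ = ENNReal.ofReal ((4 * k^2) * Real.exp (-(n:ℝ) * Emin)) := by
        rw [Finset.sum_const, nsmul_eq_mul]
        rw [← ENNReal.ofReal_natCast, ← ENNReal.ofReal_mul (by positivity)]
        congr 2
        rw [Finset.card_univ, Fintype.card_prod, Fintype.card_prod, Fintype.card_prod,
          Fintype.card_bool, Fintype.card_fin]
        push_cast
        ring
end

section
/- Let H be a finite-dimensional real inner product space, D ⊆ H a nonempty closed convex set, and proj_D : H → D the metric projection onto D (the unique nearest point map). Let (Xₙ) be a sequence of random variables with values in H such that ‖Xₙ‖ ≤ K almost surely for a constant K > 0, E[Xₙ] = μ ∈ D for every n (unbiasedness), and dist(Xₙ, D) → 0 in probability as n → ∞ (i.e. for every ε > 0, P(dist(Xₙ, D) > ε) → 0). Then E[proj_D(Xₙ)] → μ as n → ∞; that is, the projected (constrained) estimator is asymptotically unbiased. -/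
open MeasureTheory Filter RealInnerProductSpace

/-- Variational inequality for a nearest-point map onto a convex set. -/
lemma proj_inner_le {H : Type*} [NormedAddCommGroup H] [InnerProductSpace ℝ H]
    (D : Set H) (hDconvex : Convex ℝ D) (proj : H → H)
    (hproj : ∀ x : H, proj x ∈ D ∧ ∀ y ∈ D, ‖x - proj x‖ ≤ ‖x - y‖)
    (x : H) : ∀ w ∈ D, ⟪x - proj x, w - proj x⟫ ≤ 0 := by
  have hmem := (hproj x).1
  have h : ‖x - proj x‖ = ⨅ w : D, ‖x - w‖ := by
    haveI : Nonempty D := ⟨⟨proj x, hmem⟩⟩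
    apply le_antisymm
    · exact le_ciInf fun w => (hproj x).2 w w.2
    · exact ciInf_le ⟨0, fun _ ⟨w, hw⟩ => hw ▸ norm_nonneg _⟩ (⟨proj x, hmem⟩ : D)
  exact (norm_eq_iInf_iff_real_inner_le_zero hDconvex hmem).1 h

/-- The nearest-point map onto a convex set is 1-Lipschitz. -/
lemma proj_lipschitz {H : Type*} [NormedAddCommGroup H] [InnerProductSpace ℝ H]
    (D : Set H) (hDconvex : Convex ℝ D) (proj : H → H)
    (hproj : ∀ x : H, proj x ∈ D ∧ ∀ y ∈ D, ‖x - proj x‖ ≤ ‖x - y‖) :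
    LipschitzWith 1 proj := by
  apply LipschitzWith.of_dist_le_mul
  intro x y
  rw [NNReal.coe_one, one_mul, dist_eq_norm, dist_eq_norm]
  have h1 := proj_inner_le D hDconvex proj hproj x (proj y) (hproj y).1
  have h2 := proj_inner_le D hDconvex proj hproj y (proj x) (hproj x).1
  have key : ‖proj x - proj y‖ ^ 2 ≤ ⟪x - y, proj x - proj y⟫ := by
    have := add_nonpos h1 h2
    have expand : ⟪x - proj x, proj y - proj x⟫ + ⟪y - proj y, proj x - proj y⟫
        = ⟪x - y, proj y - proj x⟫ + ‖proj x - proj y‖ ^ 2 := by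
      simp only [inner_sub_left, inner_sub_right]
      rw [real_inner_comm (proj y) (proj x)]
      have hn : ‖proj x - proj y‖ ^ 2
          = ⟪proj x, proj x⟫ - 2 * ⟪proj x, proj y⟫ + ⟪proj y, proj y⟫ := by
        rw [← real_inner_self_eq_norm_sq]
        simp only [inner_sub_left, inner_sub_right]
        rw [real_inner_comm (proj y) (proj x)]; ring
      rw [hn]; rw [real_inner_comm (proj y) (proj x)]; ring
    rw [expand] at this
    have : ‖proj x - proj y‖ ^ 2 ≤ - ⟪x - y, proj y - proj x⟫ := by linarith
    rwa [← inner_neg_right, neg_sub] at this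
  rcases eq_or_ne (proj x) (proj y) with he | hne
  · simp [he, norm_nonneg]
  · have hpos : 0 < ‖proj x - proj y‖ := by
      rw [norm_pos_iff]; exact sub_ne_zero.2 hne
    have hc : ⟪x - y, proj x - proj y⟫ ≤ ‖x - y‖ * ‖proj x - proj y‖ :=
      real_inner_le_norm _ _
    nlinarith [key, sq_nonneg (‖proj x - proj y‖)]

/-- let `D` be a nonempty closed convex subset of a finite-dimensional real inner
product space `H` with metric projection `proj` (the nearest-point map onto `D`), and `Xₙ`
bounded random vectors with `E[Xₙ] = μ ∈ D` and `dist(Xₙ, D) → 0` in probability. Then the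
constrained estimator is asymptotically unbiased: `E[proj(Xₙ)] → μ`. -/
theorem constrained_estimator_asymptotically_unbiased
    {H : Type*} [NormedAddCommGroup H] [InnerProductSpace ℝ H] [FiniteDimensional ℝ H]
    [MeasurableSpace H] [BorelSpace H]
    (D : Set H) (hDne : D.Nonempty) (hDclosed : IsClosed D) (hDconvex : Convex ℝ D)
    (proj : H → H)
    (hproj : ∀ x : H, proj x ∈ D ∧ ∀ y ∈ D, ‖x - proj x‖ ≤ ‖x - y‖)
    {Ω : Type*} [MeasurableSpace Ω] (P : Measure Ω) [IsProbabilityMeasure P]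
    (X : ℕ → Ω → H) (hmeas : ∀ n, Measurable (X n))
    (K : ℝ) (hK : 0 < K) (hbound : ∀ n, ∀ᵐ ω ∂P, ‖X n ω‖ ≤ K)
    (μ : H) (hμ : μ ∈ D) (hunbiased : ∀ n, ∫ ω, X n ω ∂P = μ)
    (hdist : ∀ ε > 0,
      Tendsto (fun n => P {ω | ε < Metric.infDist (X n ω) D}) atTop (nhds 0)) :
    Tendsto (fun n => ∫ ω, proj (X n ω) ∂P) atTop (nhds μ) := by
  have hLip := proj_lipschitz D hDconvex proj hproj
  have hprojCont : Continuous proj := hLip.continuous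
  -- dist to D equals ‖x - proj x‖
  have hdistEq : ∀ x : H, Metric.infDist x D = ‖x - proj x‖ := by
    intro x
    apply le_antisymm
    · rw [← dist_eq_norm]; exact Metric.infDist_le_dist_of_mem (hproj x).1
    · by_contra hcon
      push_neg at hcon
      obtain ⟨y, hy, hlt⟩ := (Metric.infDist_lt_iff hDne).1 hcon
      rw [dist_eq_norm] at hlt
      exact absurd ((hproj x).2 y hy) (not_le.2 hlt)
  set C : ℝ := K + ‖μ‖ with hC
  have hCpos : 0 < C := by positivity
  -- pointwise bounds
  have hfbound : ∀ n, ∀ᵐ ω ∂P, Metric.infDist (X n ω) D ≤ C := by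
    intro n
    filter_upwards [hbound n] with ω hω
    calc Metric.infDist (X n ω) D ≤ dist (X n ω) μ := Metric.infDist_le_dist_of_mem hμ
      _ ≤ ‖X n ω‖ + ‖μ‖ := by rw [dist_eq_norm]; exact norm_sub_le _ _
      _ ≤ K + ‖μ‖ := by linarith
  have hXint : ∀ n, Integrable (X n) P :=
    fun n => Integrable.mono' (integrable_const K)
      (hmeas n).aestronglyMeasurable (hbound n)
  have hprojXmeas : ∀ n, Measurable fun ω => proj (X n ω) :=
    fun n => hprojCont.measurable.comp (hmeas n)
  have hprojXint : ∀ n, Integrable (fun ω => proj (X n ω)) P := by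
    intro n
    apply Integrable.mono' (integrable_const (K + C)) (hprojXmeas n).aestronglyMeasurable
    filter_upwards [hbound n, hfbound n] with ω hω hω2
    calc ‖proj (X n ω)‖ ≤ ‖X n ω‖ + ‖X n ω - proj (X n ω)‖ := by
          have := norm_sub_le (X n ω) (X n ω - proj (X n ω)); simpa using this
      _ ≤ K + C := by rw [← hdistEq]; linarith
  -- f n := integral of infDist
  set f : ℕ → ℝ := fun n => ∫ ω, Metric.infDist (X n ω) D ∂P with hf
  have hfint : ∀ n, Integrable (fun ω => Metric.infDist (X n ω) D) P := by
    intro n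
    apply Integrable.mono' (integrable_const C)
      ((Metric.continuous_infDist_pt D).measurable.comp (hmeas n)).aestronglyMeasurable
    filter_upwards [hfbound n] with ω hω
    show ‖Metric.infDist (X n ω) D‖ ≤ C
    rwa [Real.norm_eq_abs, abs_of_nonneg (Metric.infDist_nonneg)]
  have hf0 : Tendsto f atTop (nhds 0) := by
    rw [Metric.tendsto_atTop]
    intro ε hε
    set ε' := ε / 2 with hε'
    have hε'pos : 0 < ε' := by positivity
    have hP := hdist ε' hε'pos
    have hPsmall : ∀ᶠ n in atTop,
        P {ω | ε' < Metric.infDist (X n ω) D} < ENNReal.ofReal (ε' / C) :=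
      hP.eventually_lt_const (ENNReal.ofReal_pos.2 (by positivity : (0:ℝ) < ε' / C))
    obtain ⟨N, hN⟩ := eventually_atTop.1 hPsmall
    refine ⟨N, fun n hnN => ?_⟩
    have hn := hN n hnN
    have hSmeas : MeasurableSet {ω | ε' < Metric.infDist (X n ω) D} :=
      measurableSet_lt measurable_const
        ((Metric.continuous_infDist_pt D).measurable.comp (hmeas n))
    have hfn_nonneg : 0 ≤ f n :=
      integral_nonneg fun ω => Metric.infDist_nonneg
    have hub : f n ≤ ε' + C * (P {ω | ε' < Metric.infDist (X n ω) D}).toReal := by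
      have hle : ∀ᵐ ω ∂P, Metric.infDist (X n ω) D
          ≤ ε' + Set.indicator {ω | ε' < Metric.infDist (X n ω) D} (fun _ => C) ω := by
        filter_upwards [hfbound n] with ω hω
        by_cases hωS : ω ∈ {ω | ε' < Metric.infDist (X n ω) D}
        · rw [Set.indicator_of_mem hωS]; linarith
        · rw [Set.indicator_of_notMem hωS]
          simp only [Set.mem_setOf_eq, not_lt] at hωS
          linarith
      calc f n ≤ ∫ ω, (ε' + Set.indicator {ω | ε' < Metric.infDist (X n ω) D}
              (fun _ => C) ω) ∂P := by
            apply integral_mono_ae (hfint n) _ hle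
            exact (integrable_const ε').add
              ((integrable_const C).indicator hSmeas)
        _ = ε' + C * (P {ω | ε' < Metric.infDist (X n ω) D}).toReal := by
            rw [integral_add (integrable_const ε') ((integrable_const C).indicator hSmeas),
              integral_const, integral_indicator_const _ hSmeas]
            simp [smul_eq_mul, mul_comm, measureReal_def]
    have hPlt : (P {ω | ε' < Metric.infDist (X n ω) D}).toReal < ε' / C := by
      rw [← ENNReal.ofReal_toReal (measure_ne_top P _)] at hn
      exact (ENNReal.ofReal_lt_ofReal_iff (by positivity)).1 hn
    have : C * (P {ω | ε' < Metric.infDist (X n ω) D}).toReal < ε' := by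
      have := mul_lt_mul_of_pos_left hPlt hCpos
      rwa [mul_div_cancel₀ _ (ne_of_gt hCpos)] at this
    rw [Real.dist_eq, sub_zero, abs_of_nonneg hfn_nonneg]
    linarith
  -- error term
  have hkey : ∀ n, ‖(∫ ω, proj (X n ω) ∂P) - μ‖ ≤ f n := by
    intro n
    have : (∫ ω, proj (X n ω) ∂P) - μ = ∫ ω, (proj (X n ω) - X n ω) ∂P := by
      rw [integral_sub (hprojXint n) (hXint n), hunbiased n]
    rw [this]
    calc ‖∫ ω, (proj (X n ω) - X n ω) ∂P‖ ≤ ∫ ω, ‖proj (X n ω) - X n ω‖ ∂P :=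
          norm_integral_le_integral_norm _
      _ = f n := by
          apply integral_congr_ae
          filter_upwards with ω
          rw [hdistEq, ← norm_neg]; congr 1; abel
  have : Tendsto (fun n => ‖(∫ ω, proj (X n ω) ∂P) - μ‖) atTop (nhds 0) :=
    squeeze_zero (fun n => norm_nonneg _) hkey hf0
  rwa [← tendsto_sub_nhds_zero_iff, tendsto_zero_iff_norm_tendsto_zero]
end

section
/- Let A be a k×k Hermitian matrix with trace 1 and let U be a unitary matrix such that U A U* = Diag(x₁, …, x_k) is diagonal. Let y = (y₁, …, y_k) be the unique point of the probability simplex Δ_k = { y ∈ ℝᵏ : yᵢ ≥ 0, Σᵢ yᵢ = 1 } minimizing Σᵢ (xᵢ − yᵢ)². Then U* Diag(y₁, …, y_k) U is the unique density matrix minimizing the Hilbert–Schmidt distance Tr((A − ω)²) over all k×k density matrices ω. -/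
open Matrix
open scoped ComplexOrder

/-- Strict convexity: minimizers of `Σ (xᵢ - zᵢ)²` over the simplex are unique. -/
lemma simplex_min_unique {k : ℕ} (x y b : Fin k → ℝ)
    (hy₀ : ∀ i, 0 ≤ y i) (hy₁ : ∑ i, y i = 1)
    (hymin : ∀ z : Fin k → ℝ, (∀ i, 0 ≤ z i) → ∑ i, z i = 1 →
      ∑ i, (x i - y i) ^ 2 ≤ ∑ i, (x i - z i) ^ 2)
    (hb₀ : ∀ i, 0 ≤ b i) (hb₁ : ∑ i, b i = 1)
    (heq : ∑ i, (x i - b i) ^ 2 = ∑ i, (x i - y i) ^ 2) : b = y := by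
  set z : Fin k → ℝ := fun i => (b i + y i) / 2 with hz
  have hz₀ : ∀ i, 0 ≤ z i := fun i => by
    have := hb₀ i; have := hy₀ i; simp only [hz]; linarith
  have hz₁ : ∑ i, z i = 1 := by
    simp only [hz]
    rw [← Finset.sum_div, Finset.sum_add_distrib, hb₁, hy₁]; norm_num
  have key : ∑ i, (x i - z i) ^ 2
      = ∑ i, ((x i - b i) ^ 2 / 2 + (x i - y i) ^ 2 / 2 - (b i - y i) ^ 2 / 4) := by
    refine Finset.sum_congr rfl fun i _ => ?_
    simp only [hz]; ring
  have hsum : ∑ i, (b i - y i) ^ 2 ≤ 0 := by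
    have h1 := hymin z hz₀ hz₁
    rw [key] at h1
    simp only [Finset.sum_sub_distrib, Finset.sum_add_distrib, ← Finset.sum_div] at h1
    linarith
  have hzero : ∀ i ∈ Finset.univ, (b i - y i) ^ 2 = 0 := by
    rw [← Finset.sum_eq_zero_iff_of_nonneg fun i _ => sq_nonneg (b i - y i)]
    exact le_antisymm hsum (Finset.sum_nonneg fun i _ => sq_nonneg _)
  funext i
  have := hzero i (Finset.mem_univ i)
  nlinarith [this]

/-- Trace of the square of a Hermitian matrix as a sum of squared norms of entries. -/
lemma trace_sq_hermitian {k : ℕ} (M : Matrix (Fin k) (Fin k) ℂ) (hM : M.IsHermitian) :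
    ((M * M).trace).re = ∑ i, ∑ j, Complex.normSq (M i j) := by
  have h : (M * M).trace = ∑ i, ∑ j, (Complex.normSq (M i j) : ℂ) := by
    rw [Matrix.trace]
    refine Finset.sum_congr rfl fun i _ => ?_
    simp only [Matrix.diag_apply, Matrix.mul_apply]
    refine Finset.sum_congr rfl fun j _ => ?_
    rw [← hM.apply j i, show star (M i j) = (starRingEnd ℂ) (M i j) from rfl,
      Complex.mul_conj]
  rw [h]
  push_cast [Complex.re_sum]
  rfl

/-- if `U A U* = Diag(x)` diagonalizes a Hermitian trace-one matrix `A` and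
`y` minimizes `Σᵢ (xᵢ − yᵢ)²` over the probability simplex, then `U* Diag(y) U` is the unique
density matrix minimizing the Hilbert–Schmidt distance `Tr((A − ω)²)` over density matrices. -/
theorem constrained_estimate_via_diagonalization {k : ℕ}
    (A : Matrix (Fin k) (Fin k) ℂ) (hA : A.IsHermitian) (htrA : A.trace = 1)
    (U : Matrix (Fin k) (Fin k) ℂ) (hU₁ : U * Uᴴ = 1) (hU₂ : Uᴴ * U = 1)
    (x : Fin k → ℝ) (hdiag : U * A * Uᴴ = Matrix.diagonal (fun i => (x i : ℂ)))
    (y : Fin k → ℝ) (hy₀ : ∀ i, 0 ≤ y i) (hy₁ : ∑ i, y i = 1)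
    (hymin : ∀ z : Fin k → ℝ, (∀ i, 0 ≤ z i) → ∑ i, z i = 1 →
      ∑ i, (x i - y i) ^ 2 ≤ ∑ i, (x i - z i) ^ 2)
    (ω₀ : Matrix (Fin k) (Fin k) ℂ)
    (hω₀ : ω₀ = Uᴴ * Matrix.diagonal (fun i => (y i : ℂ)) * U) :
    (ω₀.PosSemidef ∧ ω₀.trace = 1) ∧
    ∀ ω : Matrix (Fin k) (Fin k) ℂ, ω.PosSemidef → ω.trace = 1 →
      (((A - ω₀) * (A - ω₀)).trace.re ≤ ((A - ω) * (A - ω)).trace.re) ∧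
      (((A - ω) * (A - ω)).trace.re = ((A - ω₀) * (A - ω₀)).trace.re → ω = ω₀) := by
  set D : Matrix (Fin k) (Fin k) ℂ := Matrix.diagonal (fun i => (x i : ℂ)) with hD
  set Dy : Matrix (Fin k) (Fin k) ℂ := Matrix.diagonal (fun i => (y i : ℂ)) with hDy
  -- conjugation trace invariance
  have trconj : ∀ X : Matrix (Fin k) (Fin k) ℂ, (Uᴴ * X * U).trace = X.trace := by
    intro X
    rw [Matrix.trace_mul_cycle, hU₁, Matrix.one_mul]
  have trconj' : ∀ X : Matrix (Fin k) (Fin k) ℂ, (U * X * Uᴴ).trace = X.trace := by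
    intro X
    rw [Matrix.trace_mul_cycle, hU₂, Matrix.one_mul]
  have conj_conj : ∀ X : Matrix (Fin k) (Fin k) ℂ, Uᴴ * (U * X * Uᴴ) * U = X := by
    intro X
    calc Uᴴ * (U * X * Uᴴ) * U = (Uᴴ * U) * X * (Uᴴ * U) := by noncomm_ring
    _ = X := by rw [hU₂, Matrix.one_mul, Matrix.mul_one]
  have conj_mul : ∀ X Y : Matrix (Fin k) (Fin k) ℂ,
      (Uᴴ * X * U) * (Uᴴ * Y * U) = Uᴴ * (X * (U * Uᴴ) * Y) * U := by
    intro X Y; noncomm_ring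
  have conj_sub : ∀ X Y : Matrix (Fin k) (Fin k) ℂ,
      Uᴴ * X * U - Uᴴ * Y * U = Uᴴ * (X - Y) * U := by
    intro X Y; noncomm_ring
  -- A in terms of D
  have hAD : A = Uᴴ * D * U := by
    have h := conj_conj A
    rw [hdiag] at h
    exact h.symm
  -- ω₀ is a density matrix
  have hω₀psd : ω₀.PosSemidef := by
    rw [hω₀]
    have h1 : (Dy).PosSemidef := Matrix.PosSemidef.diagonal fun i =>
      show (0 : ℂ) ≤ (y i : ℂ) from Complex.zero_le_real.mpr (hy₀ i)
    have := h1.mul_mul_conjTranspose_same Uᴴ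
    simpa using this
  have hω₀tr : ω₀.trace = 1 := by
    rw [hω₀, trconj, hDy, Matrix.trace_diagonal]
    exact_mod_cast hy₁
  refine ⟨⟨hω₀psd, hω₀tr⟩, ?_⟩
  -- value at ω₀
  have hval₀ : ((A - ω₀) * (A - ω₀)).trace.re = ∑ i, (x i - y i) ^ 2 := by
    have hsub : A - ω₀ = Uᴴ * (D - Dy) * U := by
      rw [hAD, hω₀, conj_sub]
    have hdd : D - Dy = Matrix.diagonal (fun i => ((x i : ℂ) - y i)) := by
      rw [hD, hDy, Matrix.diagonal_sub]
    have : (A - ω₀) * (A - ω₀) = Uᴴ * ((D - Dy) * (D - Dy)) * U := by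
      rw [hsub, conj_mul, hU₁, Matrix.mul_one]
    rw [this, trconj, hdd, Matrix.diagonal_mul_diagonal, Matrix.trace_diagonal]
    rw [Complex.re_sum]
    refine Finset.sum_congr rfl fun i _ => ?_
    have : ((x i : ℂ) - y i) * ((x i : ℂ) - y i) = (((x i - y i) ^ 2 : ℝ) : ℂ) := by
      push_cast; ring
    rw [this, Complex.ofReal_re]
  intro ω hω hωtr
  -- set B = U ω Uᴴ
  set B : Matrix (Fin k) (Fin k) ℂ := U * ω * Uᴴ with hB
  have hωB : ω = Uᴴ * B * U := by
    rw [hB]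
    exact (conj_conj ω).symm
  have hBpsd : B.PosSemidef := by
    have := hω.mul_mul_conjTranspose_same U
    simpa [hB] using this
  have hBtr : B.trace = 1 := by rw [hB, trconj', hωtr]
  -- diagonal entries of B
  have hBd : ∀ i, (0 : ℂ) ≤ B i i := by
    intro i
    exact hBpsd.diag_nonneg
  have hBre : ∀ i, 0 ≤ (B i i).re := fun i => (Complex.le_def.mp (hBd i)).1
  have hBim : ∀ i, (B i i).im = 0 := fun i => ((Complex.le_def.mp (hBd i)).2).symm
  set b : Fin k → ℝ := fun i => (B i i).re with hb
  have hbsum : ∑ i, b i = 1 := by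
    have : (B.trace).re = 1 := by rw [hBtr]; simp
    rw [Matrix.trace] at this
    rw [hb]
    simpa [Complex.re_sum, Matrix.diag_apply] using this
  -- M = D - B is Hermitian
  have hMH : (D - B).IsHermitian := by
    have hDH : D.IsHermitian := Matrix.isHermitian_diagonal_of_self_adjoint _
      (funext fun i => Complex.conj_ofReal (x i))
    exact hDH.sub hBpsd.1
  -- trace identity
  have hval : ((A - ω) * (A - ω)).trace.re = ∑ i, ∑ j, Complex.normSq ((D - B) i j) := by
    have hsub : A - ω = Uᴴ * (D - B) * U := by
      conv_lhs => rw [hAD, hωB]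
      rw [conj_sub]
    have : (A - ω) * (A - ω) = Uᴴ * ((D - B) * (D - B)) * U := by
      rw [hsub, conj_mul, hU₁, Matrix.mul_one]
    rw [this, trconj]
    exact trace_sq_hermitian _ hMH
  -- split diag / offdiag
  have hdiagterm : ∀ i, Complex.normSq ((D - B) i i) = (x i - b i) ^ 2 := by
    intro i
    simp only [Matrix.sub_apply, hD, Matrix.diagonal_apply_eq]
    rw [Complex.normSq_apply]
    simp [Complex.sub_re, Complex.sub_im, hBim i, hb]
    ring
  have hoffterm : ∀ i j, i ≠ j → Complex.normSq ((D - B) i j) = Complex.normSq (B i j) := by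
    intro i j hij
    simp [Matrix.sub_apply, hD, Matrix.diagonal_apply_ne _ hij]
  have hsplit : ∀ i, ∑ j, Complex.normSq ((D - B) i j)
      = (x i - b i) ^ 2 + ∑ j ∈ Finset.univ.erase i, Complex.normSq (B i j) := by
    intro i
    rw [← Finset.add_sum_erase _ _ (Finset.mem_univ i), hdiagterm i]
    congr 1
    refine Finset.sum_congr rfl fun j hj => ?_
    exact hoffterm i j (Finset.ne_of_mem_erase hj).symm
  have hvaltot : ((A - ω) * (A - ω)).trace.re
      = (∑ i, (x i - b i) ^ 2) + ∑ i, ∑ j ∈ Finset.univ.erase i, Complex.normSq (B i j) := by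
    rw [hval, ← Finset.sum_add_distrib]
    exact Finset.sum_congr rfl fun i _ => hsplit i
  have hRnn : 0 ≤ ∑ i, ∑ j ∈ Finset.univ.erase i, Complex.normSq (B i j) :=
    Finset.sum_nonneg fun i _ => Finset.sum_nonneg fun j _ => Complex.normSq_nonneg _
  have hbmin : ∑ i, (x i - y i) ^ 2 ≤ ∑ i, (x i - b i) ^ 2 := hymin b hBre hbsum
  constructor
  · rw [hval₀, hvaltot]; linarith
  · intro heq
    rw [hval₀, hvaltot] at heq
    -- equality forces off-diagonal zero and b = y
    have hR0 : ∑ i, ∑ j ∈ Finset.univ.erase i, Complex.normSq (B i j) = 0 := by linarith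
    have hbeq : ∑ i, (x i - b i) ^ 2 = ∑ i, (x i - y i) ^ 2 := by linarith
    have hby : b = y := simplex_min_unique x y b hy₀ hy₁ hymin hBre hbsum hbeq
    have hoff : ∀ i j, i ≠ j → B i j = 0 := by
      intro i j hij
      have h1 : ∀ i ∈ Finset.univ, ∑ j ∈ Finset.univ.erase i, Complex.normSq (B i j) = 0 := by
        exact (Finset.sum_eq_zero_iff_of_nonneg fun i _ =>
          Finset.sum_nonneg fun j _ => Complex.normSq_nonneg _).mp hR0
      have h2 := h1 i (Finset.mem_univ i)
      have h3 : ∀ j' ∈ Finset.univ.erase i, Complex.normSq (B i j') = 0 := by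
        exact (Finset.sum_eq_zero_iff_of_nonneg fun j _ => Complex.normSq_nonneg _).mp h2
      have := h3 j (Finset.mem_erase.mpr ⟨hij.symm, Finset.mem_univ j⟩)
      exact Complex.normSq_eq_zero.mp this
    have hBDy : B = Dy := by
      ext i j
      by_cases hij : i = j
      · subst hij
        rw [hDy, Matrix.diagonal_apply_eq]
        apply Complex.ext
        · rw [Complex.ofReal_re, ← congrFun hby i]
        · rw [hBim i, Complex.ofReal_im]
      · rw [hDy, Matrix.diagonal_apply_ne _ hij, hoff i j hij]
    rw [hωB, hBDy, ← hω₀]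
end

section
/- Let x = (x₁, …, x_n) ∈ ℝⁿ satisfy Σᵢ xᵢ = 1, with xᵢ < 0 for 1 ≤ i ≤ k and xᵢ ≥ 0 for k+1 ≤ i ≤ n (where 1 ≤ k < n). Set c = (1/(n−k))·Σ_{i=1}^{k} xᵢ and suppose xᵢ + c ≥ 0 for all i = k+1, …, n. Then the vector y defined by yᵢ = 0 for i ≤ k and yᵢ = xᵢ + c for i > k is the unique minimizer of Σᵢ (xᵢ − yᵢ)² over the probability simplex { y ∈ ℝⁿ : yᵢ ≥ 0, Σᵢ yᵢ = 1 }. -/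
open Finset

/-- projection of a trace-normalized vector with negative entries in the first
`k` coordinates onto the probability simplex: if `c = (Σ_{i<k} xᵢ)/(n−k)` and all
`xᵢ + c ≥ 0` for `i ≥ k`, then `y` (zero on the first `k` coordinates, `xᵢ + c` on the rest)
is the unique minimizer of `Σᵢ (xᵢ − yᵢ)²` over the probability simplex. -/
theorem simplex_projection_step (n k : ℕ) (hk : 1 ≤ k) (hkn : k < n)
    (x : Fin n → ℝ) (hsum : ∑ i, x i = 1)
    (hneg : ∀ i : Fin n, (i : ℕ) < k → x i < 0)
    (hnonneg : ∀ i : Fin n, k ≤ (i : ℕ) → 0 ≤ x i)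
    (c : ℝ)
    (hc : c = (∑ i ∈ univ.filter (fun i : Fin n => (i : ℕ) < k), x i) / ((n : ℝ) - (k : ℝ)))
    (hxc : ∀ i : Fin n, k ≤ (i : ℕ) → 0 ≤ x i + c)
    (y : Fin n → ℝ) (hy : y = fun i : Fin n => if (i : ℕ) < k then 0 else x i + c) :
    (∀ i, 0 ≤ y i) ∧ (∑ i, y i = 1) ∧
      ∀ z : Fin n → ℝ, (∀ i, 0 ≤ z i) → (∑ i, z i = 1) →
        (∑ i, (x i - y i) ^ 2 ≤ ∑ i, (x i - z i) ^ 2) ∧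
        (∑ i, (x i - z i) ^ 2 = ∑ i, (x i - y i) ^ 2 → z = y) := by
  classical
  have hnk : (0:ℝ) < (n:ℝ) - k := by
    have : (k:ℝ) < n := by exact_mod_cast hkn
    linarith
  set S : Finset (Fin n) := univ.filter (fun i : Fin n => (i : ℕ) < k) with hS
  have hmemS : ∀ i : Fin n, i ∈ S ↔ (i : ℕ) < k := by
    intro i; simp [hS]
  have hmemSc : ∀ i : Fin n, i ∈ Sᶜ ↔ k ≤ (i : ℕ) := by
    intro i; simp [hS, Nat.not_lt] at *
  have hcardS : S.card = k := by
    rw [hS, ← Fintype.card_subtype]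
    exact Fintype.card_fin_lt_of_le hkn.le
  have hcardSc : (Sᶜ.card : ℝ) = (n : ℝ) - k := by
    rw [Finset.card_compl, hcardS, Fintype.card_fin]
    have : (↑(n - k) : ℝ) = (n:ℝ) - k := by
      push_cast [Nat.cast_sub hkn.le]; ring
    exact this
  set s : ℝ := ∑ i ∈ S, x i with hs
  have hcs : ((n:ℝ) - k) * c = s := by
    rw [hc]; field_simp
  -- S is nonempty and s < 0
  have hSne : S.Nonempty := ⟨⟨0, Nat.lt_of_lt_of_le (by omega) hkn.le⟩, by
    rw [hmemS]; simpa using (show 0 < k from hk)⟩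
  have hsneg : s < 0 := by
    apply Finset.sum_neg (fun i hi => hneg i ((hmemS i).mp hi)) hSne
  have hcneg : c < 0 := by
    rw [hc]; exact div_neg_of_neg_of_pos hsneg hnk
  -- sum over complement of x
  have hsumSc : ∑ i ∈ Sᶜ, x i = 1 - s := by
    have := Finset.sum_add_sum_compl S x
    rw [hsum] at this; linarith
  -- y nonneg
  have hynn : ∀ i, 0 ≤ y i := by
    intro i; rw [hy]
    by_cases h : (i : ℕ) < k
    · simp [h]
    · simp only [h, if_false]
      exact hxc i (Nat.not_lt.mp h)
  -- sum of y on S is 0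
  have hySzero : ∀ i ∈ S, y i = 0 := by
    intro i hi; rw [hy]; simp [(hmemS i).mp hi]
  have hyS : ∑ i ∈ S, y i = 0 := Finset.sum_eq_zero hySzero
  have hySc : ∑ i ∈ Sᶜ, y i = 1 := by
    have hyc : ∀ i ∈ Sᶜ, y i = x i + c := by
      intro i hi; rw [hy]
      simp [Nat.not_lt.mpr ((hmemSc i).mp hi)]
    rw [Finset.sum_congr rfl hyc, Finset.sum_add_distrib, hsumSc,
      Finset.sum_const, nsmul_eq_mul, hcardSc, hcs]
    ring
  have hysum : ∑ i, y i = 1 := by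
    rw [← Finset.sum_add_sum_compl S y, hyS, hySc]; ring
  refine ⟨hynn, hysum, ?_⟩
  intro z hznn hzsum
  -- key decomposition
  have key1 : ∑ i, (x i - z i) ^ 2 =
      (∑ i, (x i - y i) ^ 2 + ∑ i, (z i - y i) ^ 2)
        - 2 * ∑ i, (z i - y i) * (x i - y i) := by
    rw [Finset.mul_sum, ← Finset.sum_add_distrib, ← Finset.sum_sub_distrib]
    exact Finset.sum_congr rfl (fun i _ => by ring)
  have key2 : ∑ i, (z i - y i) * (x i - y i) = ∑ i ∈ S, z i * (x i + c) := by
    rw [← Finset.sum_add_sum_compl S (fun i => (z i - y i) * (x i - y i))]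
    have hA : ∑ i ∈ S, (z i - y i) * (x i - y i) = ∑ i ∈ S, z i * x i := by
      refine Finset.sum_congr rfl (fun i hi => ?_)
      rw [hySzero i hi]; ring
    have hB : ∑ i ∈ Sᶜ, (z i - y i) * (x i - y i)
        = (-c) * ∑ i ∈ Sᶜ, (z i - y i) := by
      rw [Finset.mul_sum]
      refine Finset.sum_congr rfl (fun i hi => ?_)
      have : y i = x i + c := by
        rw [hy]; simp [Nat.not_lt.mpr ((hmemSc i).mp hi)]
      rw [this]; ring
    have hzSc : ∑ i ∈ Sᶜ, (z i - y i) = - ∑ i ∈ S, z i := by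
      have h1 := Finset.sum_add_sum_compl S z
      rw [hzsum] at h1
      rw [Finset.sum_sub_distrib, hySc]
      linarith
    rw [hA, hB, hzSc, neg_mul_neg, Finset.mul_sum, ← Finset.sum_add_distrib]
    exact Finset.sum_congr rfl (fun i _ => by ring)
  have hT : ∑ i ∈ S, z i * (x i + c) ≤ 0 := by
    apply Finset.sum_nonpos
    intro i hi
    have hxic : x i + c ≤ 0 := by
      have := hneg i ((hmemS i).mp hi); linarith
    exact mul_nonpos_of_nonneg_of_nonpos (hznn i) hxic
  have hd2 : 0 ≤ ∑ i, (z i - y i) ^ 2 :=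
    Finset.sum_nonneg (fun i _ => sq_nonneg _)
  constructor
  · rw [key1, key2]; linarith
  · intro heq
    rw [key1, key2] at heq
    have hd0 : ∑ i : Fin n, (z i - y i) ^ 2 = 0 := by linarith
    have := (Finset.sum_eq_zero_iff_of_nonneg (fun i _ => sq_nonneg (z i - y i))).mp hd0
    funext i
    have hi := this i (Finset.mem_univ i)
    have : z i - y i = 0 := by
      have := sq_eq_zero_iff.mp hi; exact this
    linarith
end

section
/- Let u(1), u(2), u(3) be linearly independent unit vectors in ℝ³, let T be the 3×3 real matrix whose i-th row is u(i), and define for θ ∈ ℝ³ the mean quadratic error matrix V(θ) = T⁻¹ · Diag(1 − (u(1)·θ)², 1 − (u(2)·θ)², 1 − (u(3)·θ)²) · (T⁻¹)ᵗ. Let λ̄ be the normalized Lebesgue measure on the closed unit ball B ⊆ ℝ³. Then det( ∫_B V(θ) dλ̄(θ) ) = (4/5)³ / (det T)² ≥ (4/5)³, and equality holds if and only if u(1), u(2), u(3) are pairwise orthogonal. In other words, the determinant of the average mean quadratic error matrix is smallest exactly when the measured observables u(i)·σ are complementary. -/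
open MeasureTheory Matrix Metric

noncomputable section

private abbrev E3 := EuclideanSpace ℝ (Fin 3)

private lemma vol_ball3 : volume (ball (0:E3) 1) = ENNReal.ofReal (4 * Real.pi / 3) := by
  rw [EuclideanSpace.volume_ball]
  have h1 : (Fintype.card (Fin 3) : ℝ) = 3 := by simp
  have hg : Real.Gamma ((Fintype.card (Fin 3)) / 2 + 1) = 3 / 4 * Real.sqrt Real.pi := by
    rw [h1]
    have h32 : (3:ℝ)/2 + 1 = (1/2 + 1) + 1 := by norm_num
    rw [h32, Real.Gamma_add_one (by norm_num), Real.Gamma_add_one (by norm_num),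
      Real.Gamma_one_half_eq]
    ring
  rw [hg]
  have hs : Real.sqrt Real.pi ^ Fintype.card (Fin 3) = Real.pi * Real.sqrt Real.pi := by
    have : Real.sqrt Real.pi ^ Fintype.card (Fin 3) = Real.sqrt Real.pi ^ 2 * Real.sqrt Real.pi := by
      norm_num; ring
    rw [this, Real.sq_sqrt Real.pi_pos.le]
  rw [hs]
  have hsne : Real.sqrt Real.pi ≠ 0 := ne_of_gt (Real.sqrt_pos.2 Real.pi_pos)
  rw [show Real.pi * Real.sqrt Real.pi / (3 / 4 * Real.sqrt Real.pi) = 4 * Real.pi / 3 by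
    field_simp]
  simp

private lemma vol_cB3 : volume (closedBall (0:E3) 1) = ENNReal.ofReal (4 * Real.pi / 3) := by
  rw [Measure.addHaar_closedBall_eq_addHaar_ball, vol_ball3]

private lemma integral_normsq :
    ∫ θ in closedBall (0:E3) 1, ‖θ‖^2 = 4 * Real.pi / 5 := by
  set f : ℝ → ℝ := fun r => if r ≤ 1 then r ^ 2 else 0 with hf
  have h1 : ∫ θ in closedBall (0:E3) 1, ‖θ‖^2 = ∫ x : E3, f ‖x‖ := by
    rw [← integral_indicator (measurableSet_closedBall)]
    have : (fun x : E3 => f ‖x‖) = (closedBall (0:E3) 1).indicator (fun θ => ‖θ‖^2) := by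
      funext x
      simp only [Set.indicator, mem_closedBall, dist_zero_right, hf]
    rw [this]
  rw [h1, MeasureTheory.integral_fun_norm_addHaar volume f]
  have hdim : Module.finrank ℝ E3 = 3 := by simp [finrank_euclideanSpace]
  rw [hdim, measureReal_def, vol_ball3]
  have h2 : ∫ y in Set.Ioi (0:ℝ), y ^ (3 - 1) • f y = 1 / 5 := by
    have : ∀ y ∈ Set.Ioi (0:ℝ), y ^ (3-1) • f y
        = Set.indicator (Set.Ioc (0:ℝ) 1) (fun y => y ^ 4) y := by
      intro y hy
      simp only [Set.indicator, Set.mem_Ioc, hf, smul_eq_mul]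
      by_cases h : y ≤ 1
      · simp [h, Set.mem_Ioi.1 hy]; ring
      · simp [h]
    rw [setIntegral_congr_fun measurableSet_Ioi this,
      setIntegral_indicator measurableSet_Ioc,
      show Set.Ioi (0:ℝ) ∩ Set.Ioc 0 1 = Set.Ioc 0 1 by
        rw [Set.inter_eq_right]; exact Set.Ioc_subset_Ioi_self,
      ← intervalIntegral.integral_of_le zero_le_one]
    norm_num [integral_pow]
  rw [h2]
  rw [ENNReal.toReal_ofReal (by positivity)]
  simp only [nsmul_eq_mul, smul_eq_mul]
  ring

private lemma integral_inner_sq_eq (u : E3) (hu : ‖u‖ = 1) :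
    ∫ θ in closedBall (0:E3) 1, (inner ℝ u θ : ℝ)^2
      = ∫ θ in closedBall (0:E3) 1, (inner ℝ (EuclideanSpace.single (0:Fin 3) (1:ℝ)) θ : ℝ)^2 := by
  set e0 : E3 := EuclideanSpace.single (0:Fin 3) (1:ℝ) with he0def
  have he0 : ‖e0‖ = 1 := by simp [he0def, EuclideanSpace.norm_single]
  set R : E3 ≃ₗᵢ[ℝ] E3 := Submodule.reflection (ℝ ∙ (u - e0))ᗮ with hRdef
  have hRu : R u = e0 := Submodule.reflection_sub (hu.trans he0.symm)
  have hpre : R ⁻¹' (closedBall (0:E3) 1) = closedBall (0:E3) 1 := by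
    ext x
    simp [mem_closedBall, dist_zero_right]
  have hmp := R.measurePreserving
  have hemb : MeasurableEmbedding R := R.toHomeomorph.measurableEmbedding
  have key := hmp.setIntegral_preimage_emb hemb
    (fun θ => (inner ℝ e0 θ : ℝ)^2) (closedBall (0:E3) 1)
  rw [hpre] at key
  rw [← key]
  refine setIntegral_congr_fun measurableSet_closedBall (fun θ _ => ?_)
  rw [← hRu, R.inner_map_map]

private lemma integrableOn_inner_sq (u : E3) :
    IntegrableOn (fun θ : E3 => (inner ℝ u θ : ℝ)^2) (closedBall (0:E3) 1) volume :=
  (((continuous_const.inner continuous_id).pow 2)).continuousOn.integrableOn_compact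
    (isCompact_closedBall _ _)

private lemma integral_inner_sq (u : E3) (hu : ‖u‖ = 1) :
    ∫ θ in closedBall (0:E3) 1, (inner ℝ u θ : ℝ)^2 = 4 * Real.pi / 15 := by
  set I0 := ∫ θ in closedBall (0:E3) 1, (inner ℝ (EuclideanSpace.single (0:Fin 3) (1:ℝ)) θ : ℝ)^2
    with hI0
  have hsingle : ∀ i : Fin 3,
      ∫ θ in closedBall (0:E3) 1, (inner ℝ (EuclideanSpace.single i (1:ℝ)) θ : ℝ)^2 = I0 :=
    fun i => integral_inner_sq_eq _ (by simp [EuclideanSpace.norm_single])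
  have hsum : ∫ θ in closedBall (0:E3) 1,
      (∑ i : Fin 3, (inner ℝ (EuclideanSpace.single i (1:ℝ)) θ : ℝ)^2) = 3 * I0 := by
    rw [integral_finset_sum _ (fun i _ => integrableOn_inner_sq _), Fin.sum_univ_three,
      hsingle 0, hsingle 1, hsingle 2]
    ring
  have hnorm : ∀ θ : E3, (∑ i : Fin 3, (inner ℝ (EuclideanSpace.single i (1:ℝ)) θ : ℝ)^2)
      = ‖θ‖^2 := by
    intro θ
    have := real_inner_self_eq_norm_sq θ
    rw [← this, PiLp.inner_apply]
    refine Finset.sum_congr rfl (fun i _ => ?_)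
    rw [EuclideanSpace.inner_single_left]
    simp [sq]
  rw [setIntegral_congr_fun measurableSet_closedBall (fun θ _ => hnorm θ), integral_normsq] at hsum
  have h := integral_inner_sq_eq u hu
  rw [h, ← hI0]
  linarith

private lemma entry_int (u : E3) (hu : ‖u‖ = 1) :
    ∫ θ in closedBall (0:E3) 1, (1 - (inner ℝ u θ : ℝ)^2)
      ∂((ENNReal.ofReal (4 * Real.pi / 3))⁻¹ • volume) = 4/5 := by
  have hπ := Real.pi_pos
  rw [Measure.restrict_smul, integral_smul_measure]
  have h1 : ∫ θ in closedBall (0:E3) 1, (1 - (inner ℝ u θ : ℝ)^2) ∂volume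
      = 16 * Real.pi / 15 := by
    rw [integral_sub
      (integrableOn_const (C := (1:ℝ)) (by rw [vol_cB3]; exact ENNReal.ofReal_ne_top))
      (integrableOn_inner_sq u)]
    rw [setIntegral_const, integral_inner_sq u hu, measureReal_def, vol_cB3,
      ENNReal.toReal_ofReal (by positivity), smul_eq_mul, mul_one]
    ring
  rw [h1, ENNReal.toReal_inv, ENNReal.toReal_ofReal (by positivity), smul_eq_mul]
  field_simp
  ring

set_option maxHeartbeats 1000000 in
/-- for linearly independent unit vectors `u(1), u(2), u(3)` forming the rows of
`T`, the average over the Bloch ball (normalized Lebesgue measure) of the mean quadratic error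
matrix `V(θ) = T⁻¹·Diag(1 − (u(i)·θ)²)·(T⁻¹)ᵗ` has determinant `(4/5)³/(det T)² ≥ (4/5)³`,
with equality exactly when the vectors are pairwise orthogonal (complementary observables). -/
theorem det_average_mqe_min_iff_complementary
    (u : Fin 3 → EuclideanSpace ℝ (Fin 3)) (hu : ∀ i, ‖u i‖ = 1)
    (hind : LinearIndependent ℝ u)
    (T : Matrix (Fin 3) (Fin 3) ℝ) (hT : ∀ i j, T i j = u i j)
    (V : EuclideanSpace ℝ (Fin 3) → Matrix (Fin 3) (Fin 3) ℝ)
    (hV : ∀ θ, V θ =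
      T⁻¹ * Matrix.diagonal (fun i => 1 - (inner ℝ (u i) θ : ℝ) ^ 2) * (T⁻¹)ᵀ)
    (W : Matrix (Fin 3) (Fin 3) ℝ)
    (hW : ∀ i j, W i j = ∫ θ in Metric.closedBall (0 : EuclideanSpace ℝ (Fin 3)) 1,
        V θ i j ∂((ENNReal.ofReal (4 * Real.pi / 3))⁻¹ • volume)) :
    W.det = (4 / 5) ^ 3 / T.det ^ 2 ∧
    (4 / 5) ^ 3 ≤ W.det ∧
    (W.det = (4 / 5) ^ 3 ↔ ∀ i j, i ≠ j → (inner ℝ (u i) (u j) : ℝ) = 0) := by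
  have hπ := Real.pi_pos
  -- integrability wrt the normalized restricted measure
  have hcne : (ENNReal.ofReal (4 * Real.pi / 3))⁻¹ ≠ ⊤ :=
    ENNReal.inv_ne_top.2 (ENNReal.ofReal_pos.2 (by positivity)).ne'
  have hint : ∀ k : Fin 3, Integrable (fun θ : E3 => 1 - (inner ℝ (u k) θ : ℝ)^2)
      (((ENNReal.ofReal (4 * Real.pi / 3))⁻¹ • volume).restrict (closedBall (0:E3) 1)) := by
    intro k
    rw [Measure.restrict_smul]
    refine Integrable.smul_measure ?_ hcne
    exact (continuous_const.sub
      ((continuous_const.inner continuous_id).pow 2)).continuousOn.integrableOn_compact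
      (isCompact_closedBall _ _)
  -- W as an explicit matrix
  have hWmat : W = (4/5 : ℝ) • (T⁻¹ * (T⁻¹)ᵀ) := by
    ext i j
    rw [hW]
    have hVij : ∀ θ : E3, V θ i j
        = ∑ k, T⁻¹ i k * (1 - (inner ℝ (u k) θ : ℝ)^2) * T⁻¹ j k := by
      intro θ
      rw [hV, Matrix.mul_apply]
      refine Finset.sum_congr rfl (fun k _ => ?_)
      rw [Matrix.mul_diagonal, Matrix.transpose_apply]
    calc (∫ θ in closedBall (0:E3) 1, V θ i j
            ∂((ENNReal.ofReal (4 * Real.pi / 3))⁻¹ • volume))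
        = ∫ θ in closedBall (0:E3) 1,
            (∑ k, T⁻¹ i k * (1 - (inner ℝ (u k) θ : ℝ)^2) * T⁻¹ j k)
            ∂((ENNReal.ofReal (4 * Real.pi / 3))⁻¹ • volume) := by
          simp only [hVij]
      _ = ∑ k, ∫ θ in closedBall (0:E3) 1,
            T⁻¹ i k * (1 - (inner ℝ (u k) θ : ℝ)^2) * T⁻¹ j k
            ∂((ENNReal.ofReal (4 * Real.pi / 3))⁻¹ • volume) := by
          exact integral_finset_sum _ (fun k _ => ((hint k).const_mul _).mul_const _)
      _ = ∑ k, T⁻¹ i k * (4/5) * T⁻¹ j k := by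
          refine Finset.sum_congr rfl (fun k _ => ?_)
          rw [show (fun θ : E3 => T⁻¹ i k * (1 - (inner ℝ (u k) θ : ℝ)^2) * T⁻¹ j k)
              = (fun θ : E3 => (T⁻¹ i k * T⁻¹ j k) • (1 - (inner ℝ (u k) θ : ℝ)^2)) by
            funext θ; simp [smul_eq_mul]; ring]
          rw [integral_smul, entry_int (u k) (hu k), smul_eq_mul]
          ring
      _ = ((4/5 : ℝ) • (T⁻¹ * (T⁻¹)ᵀ)) i j := by
          simp [Matrix.mul_apply, Matrix.transpose_apply, Finset.mul_sum]
          exact Finset.sum_congr rfl (fun k _ => by ring)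
  -- determinant of T is nonzero
  have hTunit : IsUnit T := by
    rw [← Matrix.linearIndependent_rows_iff_isUnit]
    have h2 : LinearIndependent ℝ (fun i => (WithLp.linearEquiv 2 ℝ (Fin 3 → ℝ)) (u i)) :=
      hind.map' _ (LinearEquiv.ker _)
    convert h2 using 2 with i
    funext j
    exact hT i j
    rfl
  have hdet : T.det ≠ 0 := by
    intro h
    exact (Matrix.isUnit_iff_isUnit_det T).1 hTunit |>.ne_zero h
  have hdT2 : (0:ℝ) < T.det ^ 2 := by positivity
  -- Gram determinant
  set a : ℝ := inner ℝ (u 0) (u 1) with ha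
  set b : ℝ := inner ℝ (u 0) (u 2) with hb
  set c : ℝ := inner ℝ (u 1) (u 2) with hc
  have hE : ∀ i j, (T * Tᵀ) i j = (inner ℝ (u i) (u j) : ℝ) := by
    intro i j
    rw [Matrix.mul_apply, PiLp.inner_apply]
    exact Finset.sum_congr rfl (fun k _ => by
      simp [Matrix.transpose_apply, hT, RCLike.inner_apply, mul_comm])
  have hdiag : ∀ i, (inner ℝ (u i) (u i) : ℝ) = 1 := fun i => by
    rw [real_inner_self_eq_norm_sq, hu i]; norm_num
  have hGram : T.det ^ 2 = 1 - a^2 - b^2 - c^2 + 2*a*b*c := by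
    have h1 : T.det ^ 2 = (T * Tᵀ).det := by rw [Matrix.det_mul, Matrix.det_transpose]; ring
    rw [h1, Matrix.det_fin_three, hE 0 0, hE 0 1, hE 0 2, hE 1 0, hE 1 1, hE 1 2,
      hE 2 0, hE 2 1, hE 2 2, hdiag 0, hdiag 1, hdiag 2]
    have e1 : (inner ℝ (u 1) (u 0) : ℝ) = a := by rw [ha]; exact real_inner_comm _ _
    have e2 : (inner ℝ (u 2) (u 0) : ℝ) = b := by rw [hb]; exact real_inner_comm _ _
    have e3 : (inner ℝ (u 2) (u 1) : ℝ) = c := by rw [hc]; exact real_inner_comm _ _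
    rw [e1, e2, e3]
    ring
  -- Cauchy-Schwarz bounds
  have habs : ∀ i j, ((inner ℝ (u i) (u j) : ℝ))^2 ≤ 1 := by
    intro i j
    have h := abs_real_inner_le_norm (u i) (u j)
    rw [hu i, hu j, mul_one] at h
    nlinarith [abs_nonneg (inner ℝ (u i) (u j) : ℝ), sq_abs (inner ℝ (u i) (u j) : ℝ)]
  have ha2 : a^2 ≤ 1 := habs 0 1
  have hb2 : b^2 ≤ 1 := habs 0 2
  have hc2 : c^2 ≤ 1 := habs 1 2
  have hle1 : T.det ^ 2 ≤ 1 := by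
    nlinarith [sq_nonneg (a - b*c), mul_nonneg (sub_nonneg.2 hb2) (sq_nonneg c)]
  -- determinant of W
  have hWdet : W.det = (4/5)^3 / T.det ^ 2 := by
    rw [hWmat, Matrix.det_smul, Matrix.det_mul, Matrix.det_transpose,
      Matrix.det_nonsing_inv, Ring.inverse_eq_inv]
    simp [Fintype.card_fin]
    field_simp
  refine ⟨hWdet, ?_, ?_⟩
  · rw [hWdet, le_div_iff₀ hdT2]
    nlinarith
  · rw [hWdet]
    constructor
    · intro h
      have hd1 : T.det ^ 2 = 1 := by
        field_simp at h
        linarith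
      have hsum : a^2 + b^2 + c^2 = 2*a*b*c := by nlinarith [hGram, hd1]
      have hb0 : b = 0 := by
        have h2 : b^2 ≤ 0 := by
          nlinarith [sq_nonneg (a - b*c), mul_nonneg (sub_nonneg.2 hb2) (sq_nonneg c)]
        exact pow_eq_zero_iff two_ne_zero |>.1 (le_antisymm h2 (sq_nonneg b))
      have hac : a^2 + c^2 = 0 := by rw [hb0] at hsum; nlinarith [hsum]
      have ha0 : a = 0 := pow_eq_zero_iff two_ne_zero |>.1
        (le_antisymm (by nlinarith [sq_nonneg c]) (sq_nonneg a))
      have hc0 : c = 0 := pow_eq_zero_iff two_ne_zero |>.1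
        (le_antisymm (by nlinarith [sq_nonneg a]) (sq_nonneg c))
      intro i j hij
      fin_cases i <;> fin_cases j <;>
        first
          | exact absurd rfl hij
          | exact ha0
          | exact hb0
          | exact hc0
          | (rw [real_inner_comm]; first | exact ha0 | exact hb0 | exact hc0)
    · intro h
      have ha0 : a = 0 := h 0 1 (by decide)
      have hb0 : b = 0 := h 0 2 (by decide)
      have hc0 : c = 0 := h 1 2 (by decide)
      rw [hGram, ha0, hb0, hc0]
      norm_num
end
end

section
/- For every θ = (θ₁, θ₂, θ₃) ∈ ℝ³, the 3×3 real symmetric matrix with diagonal entries 2θ₁², 2θ₂², 2θ₃² and off-diagonal entries −θ₁θ₂, −θ₁θ₃, −θ₂θ₃ (in positions (1,2), (1,3), (2,3) and symmetrically) is positive semidefinite. Equivalently, 3·Diag(1−θ₁², 1−θ₂², 1−θ₃²) ≼ 3I − θθᵗ in the Loewner order; hence the mean quadratic error matrix of the complementary measurement of σ₁, σ₂, σ₃ is smaller than or equal to that of the standard qubit tomography, so the complementary measurement is more efficient. -/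
lemma psd_aux (θ : Fin 3 → ℝ) :
    (Matrix.of fun i j : Fin 3 =>
      if i = j then 2 * θ i ^ 2 else -(θ i * θ j) : Matrix (Fin 3) (Fin 3) ℝ).PosSemidef := by
  rw [Matrix.posSemidef_iff_dotProduct_mulVec]
  constructor
  · ext i j
    fin_cases i <;> fin_cases j <;>
      simp [Matrix.conjTranspose_apply, Matrix.of_apply] <;> ring
  · intro x
    have key : dotProduct (star x) ((Matrix.of fun i j : Fin 3 =>
        if i = j then 2 * θ i ^ 2 else -(θ i * θ j) : Matrix (Fin 3) (Fin 3) ℝ).mulVec x)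
        = (θ 0 * x 0 - θ 1 * x 1)^2 + (θ 0 * x 0 - θ 2 * x 2)^2 + (θ 1 * x 1 - θ 2 * x 2)^2 := by
      simp [dotProduct, Matrix.mulVec, Fin.sum_univ_three, Matrix.of_apply]
      ring
    rw [key]
    positivity

/-- For every `θ ∈ ℝ³`, the symmetric matrix with diagonal `2θᵢ²` and
off-diagonal entries `−θᵢθⱼ` is positive semidefinite; equivalently
`3·Diag(1−θᵢ²) ≼ 3I − θθᵗ` in the Loewner order (the complementary measurement is more
efficient than standard qubit tomography). -/
theorem comp_more_efficient_than_standard (θ : Fin 3 → ℝ) :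
    (Matrix.of fun i j : Fin 3 =>
      if i = j then 2 * θ i ^ 2 else -(θ i * θ j) : Matrix (Fin 3) (Fin 3) ℝ).PosSemidef ∧
    ((3 : ℝ) • (1 : Matrix (Fin 3) (Fin 3) ℝ) - Matrix.vecMulVec θ θ -
      (3 : ℝ) • Matrix.diagonal (fun i => 1 - θ i ^ 2)).PosSemidef := by
  refine ⟨psd_aux θ, ?_⟩
  have h : ((3 : ℝ) • (1 : Matrix (Fin 3) (Fin 3) ℝ) - Matrix.vecMulVec θ θ -
      (3 : ℝ) • Matrix.diagonal (fun i => 1 - θ i ^ 2)) =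
      (Matrix.of fun i j : Fin 3 =>
        if i = j then 2 * θ i ^ 2 else -(θ i * θ j) : Matrix (Fin 3) (Fin 3) ℝ) := by
    ext i j
    fin_cases i <;> fin_cases j <;>
      simp [Matrix.vecMulVec_apply, Matrix.one_apply, Matrix.diagonal_apply,
        Matrix.of_apply] <;> ring
  rw [h]
  exact psd_aux θ
end

section
/- Let a₁ = (1,1,1)/√3, a₂ = (1,−1,−1)/√3, a₃ = (−1,1,−1)/√3, a₄ = (−1,−1,1)/√3 ∈ ℝ³ and define Fᵢ = ¼(I + aᵢ·σ) for 1 ≤ i ≤ 4, where σ₁, σ₂, σ₃ are the Pauli matrices. Then (i) each Fᵢ is positive semidefinite and Σ_{i=1}^{4} Fᵢ = I, so (F₁, F₂, F₃, F₄) is a POVM; (ii) for every θ ∈ ℝ³ with ‖θ‖ ≤ 1, the outcome probabilities are pᵢ = Tr(Fᵢ ρ_θ) = ¼(1 + aᵢ·θ); and (iii) the estimator Φ^{min}(i) = −I + 6Fᵢ is unbiased: Σ_{i=1}^{4} pᵢ · Φ^{min}(i) = ρ_θ. -/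
open Matrix
open scoped ComplexOrder

/-- The three Pauli matrices. -/
noncomputable def pauliStmt17 : Fin 3 → Matrix (Fin 2) (Fin 2) ℂ :=
  ![!![0, 1; 1, 0], !![0, -Complex.I; Complex.I, 0], !![1, 0; 0, -1]]

/-- The four Bloch vectors of minimal qubit tomography. -/
noncomputable def tetraStmt17 : Fin 4 → Fin 3 → ℝ :=
  fun i => (Real.sqrt 3)⁻¹ • ![![1, 1, 1], ![1, -1, -1], ![-1, 1, -1], ![-1, -1, 1]] i

/-- Auxiliary: a Hermitian matrix `A` with `A * A = (1/2) • A` is positive semidefinite. -/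
lemma psdAuxStmt17 (A : Matrix (Fin 2) (Fin 2) ℂ) (h1 : Aᴴ = A)
    (h2 : A * A = (1/2 : ℂ) • A) : A.PosSemidef := by
  have key : A = (((Real.sqrt 2 : ℝ) : ℂ) • A)ᴴ * (((Real.sqrt 2 : ℝ) : ℂ) • A) := by
    rw [conjTranspose_smul, h1, smul_mul_assoc, mul_smul_comm, h2, smul_smul, smul_smul]
    rw [Complex.star_def, Complex.conj_ofReal]
    norm_cast
    rw [show Real.sqrt 2 * (Real.sqrt 2) = 2 from Real.mul_self_sqrt (by norm_num)]
    simp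
  rw [key]
  exact posSemidef_conjTranspose_mul_self _

/-- Auxiliary: each tetrahedral Bloch vector gives a `σ`-combination squaring to `1`. -/
lemma tetraSqStmt17 (i : Fin 4) :
    (∑ j, ((tetraStmt17 i j : ℝ) : ℂ) • pauliStmt17 j) *
    (∑ j, ((tetraStmt17 i j : ℝ) : ℂ) • pauliStmt17 j) = 1 := by
  fin_cases i <;>
  · simp only [tetraStmt17, pauliStmt17, Fin.sum_univ_three]
    ext a b
    fin_cases a <;> fin_cases b <;>
      simp [Matrix.mul_apply, Matrix.one_apply, Matrix.add_apply, Matrix.smul_apply,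
        Fin.sum_univ_succ, Complex.ext_iff] <;>
      ring_nf <;> norm_num [Real.sq_sqrt]

/-- Auxiliary: the `σ`-combinations are Hermitian. -/
lemma tetraHermStmt17 (i : Fin 4) :
    (∑ j, ((tetraStmt17 i j : ℝ) : ℂ) • pauliStmt17 j)ᴴ
      = ∑ j, ((tetraStmt17 i j : ℝ) : ℂ) • pauliStmt17 j := by
  fin_cases i <;>
  · simp only [tetraStmt17, pauliStmt17, Fin.sum_univ_three]
    ext a b
    fin_cases a <;> fin_cases b <;>
      simp [Matrix.conjTranspose_apply, Matrix.add_apply, Matrix.smul_apply, Complex.ext_iff]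

set_option maxHeartbeats 2000000 in
/-- the minimal qubit tomography operators `Fᵢ = ¼(I + aᵢ·σ)` form a POVM
(positive semidefinite, summing to `I`), the outcome probabilities in the state
`ρ_θ = ½(I + θ·σ)` are `Tr(Fᵢρ_θ) = ¼(1 + aᵢ·θ)`, and the estimator `Φ^min(i) = −I + 6Fᵢ`
is unbiased: `Σᵢ pᵢ Φ^min(i) = ρ_θ`. -/
theorem minimal_tomography_povm_unbiased
    (F : Fin 4 → Matrix (Fin 2) (Fin 2) ℂ)
    (hF : ∀ i, F i = (1 / 4 : ℂ) • (1 + ∑ j, ((tetraStmt17 i j : ℝ) : ℂ) • pauliStmt17 j)) :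
    (∀ i, (F i).PosSemidef) ∧ (∑ i, F i = 1) ∧
    ∀ θ : EuclideanSpace ℝ (Fin 3), ‖θ‖ ≤ 1 →
      (∀ i, (F i * ((1 / 2 : ℂ) • (1 + ∑ j, (θ j : ℂ) • pauliStmt17 j))).trace =
        (((1 + ∑ j, tetraStmt17 i j * θ j) / 4 : ℝ) : ℂ)) ∧
      (∑ i, (((1 + ∑ j, tetraStmt17 i j * θ j) / 4 : ℝ) : ℂ) • (-1 + (6 : ℂ) • F i) =
        (1 / 2 : ℂ) • (1 + ∑ j, (θ j : ℂ) • pauliStmt17 j)) := by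
  refine ⟨?_, ?_, ?_⟩
  · intro i
    apply psdAuxStmt17
    · rw [hF]
      rw [conjTranspose_smul, conjTranspose_add, conjTranspose_one, tetraHermStmt17]
      congr 1
      simp [Complex.ext_iff]
    · rw [hF]
      rw [smul_mul_assoc, mul_smul_comm, smul_smul]
      rw [add_mul, mul_add, mul_add, one_mul, mul_one, tetraSqStmt17]
      rw [smul_smul]
      norm_num
      module
  · simp only [hF, tetraStmt17, pauliStmt17, Fin.sum_univ_three, Fin.sum_univ_four]
    ext a b
    fin_cases a <;> fin_cases b <;>
      simp [Matrix.one_apply, Matrix.add_apply, Matrix.smul_apply] <;> ring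
  · intro θ _
    constructor
    · intro i
      fin_cases i <;>
      · simp only [hF, tetraStmt17, pauliStmt17, Fin.sum_univ_three, Matrix.trace,
          Matrix.diag, Fin.sum_univ_two]
        simp [Matrix.mul_apply, Matrix.add_apply, Matrix.smul_apply, Matrix.one_apply,
          Fin.sum_univ_succ]
        push_cast
        ring_nf
        try simp only [Complex.I_sq]
        try ring1
    · simp only [hF, tetraStmt17, pauliStmt17, Fin.sum_univ_three, Fin.sum_univ_four]
      ext a b
      fin_cases a <;> fin_cases b <;>
      · simp [Matrix.add_apply, Matrix.smul_apply, Matrix.one_apply, Matrix.neg_apply]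
        ring_nf
        simp [Complex.ext_iff]
        ring_nf
        norm_num [← Complex.ofReal_pow, Real.sq_sqrt] <;>
          (first | ring1 | (constructor <;> (first | ring1 | trivial)))
end

section
/- There exists θ ∈ ℝ³ with ‖θ‖ ≤ 1 such that the difference M^{min}(θ) − 3·Diag(1−θ₁², 1−θ₂², 1−θ₃²) is indefinite, i.e. neither positive semidefinite nor negative semidefinite; here M^{min}(θ) is the 3×3 symmetric matrix with diagonal entries 3 − θᵢ² and off-diagonal entries √3·θ₃ − θ₁θ₂, √3·θ₂ − θ₁θ₃, √3·θ₁ − θ₂θ₃ in positions (1,2), (1,3), (2,3). (For instance θ = (t, 0, 0) with 0 < t ≤ 1 works.) Hence the mean quadratic error matrices of minimal qubit tomography and of the complementary measurement scheme are not comparable in the Loewner order. -/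
/-- there is a Bloch vector `θ`, `‖θ‖ ≤ 1`, for which the difference
`M^min(θ) − 3·Diag(1−θᵢ²)` between the mean quadratic error matrices of minimal qubit
tomography and of the complementary scheme is indefinite: neither it nor its negative is
positive semidefinite, so the two schemes are not comparable in the Loewner order. -/
theorem min_and_comp_mqe_not_comparable :
    ∃ θ : EuclideanSpace ℝ (Fin 3), ‖θ‖ ≤ 1 ∧
      ¬ (Matrix.of
          ![![3 - θ 0 ^ 2, Real.sqrt 3 * θ 2 - θ 0 * θ 1, Real.sqrt 3 * θ 1 - θ 0 * θ 2],
            ![Real.sqrt 3 * θ 2 - θ 0 * θ 1, 3 - θ 1 ^ 2, Real.sqrt 3 * θ 0 - θ 1 * θ 2],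
            ![Real.sqrt 3 * θ 1 - θ 0 * θ 2, Real.sqrt 3 * θ 0 - θ 1 * θ 2, 3 - θ 2 ^ 2]] -
          (3 : ℝ) • Matrix.diagonal (fun i : Fin 3 => 1 - θ i ^ 2)).PosSemidef ∧
      ¬ ((3 : ℝ) • Matrix.diagonal (fun i : Fin 3 => 1 - θ i ^ 2) -
          Matrix.of
          ![![3 - θ 0 ^ 2, Real.sqrt 3 * θ 2 - θ 0 * θ 1, Real.sqrt 3 * θ 1 - θ 0 * θ 2],
            ![Real.sqrt 3 * θ 2 - θ 0 * θ 1, 3 - θ 1 ^ 2, Real.sqrt 3 * θ 0 - θ 1 * θ 2],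
            ![Real.sqrt 3 * θ 1 - θ 0 * θ 2, Real.sqrt 3 * θ 0 - θ 1 * θ 2, 3 - θ 2 ^ 2]]).PosSemidef := by
  refine ⟨(WithLp.equiv 2 _).symm ![1, 0, 0], ?_, ?_, ?_⟩
  · rw [EuclideanSpace.norm_eq]
    simp [Fin.sum_univ_three]
  · intro h
    have := h.dotProduct_mulVec_nonneg ![0, 1, -1]
    simp [Matrix.mulVec, dotProduct, Fin.sum_univ_three, Matrix.diagonal] at this
    nlinarith [Real.sqrt_pos.mpr (by norm_num : (0:ℝ) < 3), this]
  · intro h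
    have := h.dotProduct_mulVec_nonneg ![1, 0, 0]
    simp [Matrix.mulVec, dotProduct, Fin.sum_univ_three, Matrix.diagonal] at this
end
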